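/- arXiv:2006.13701 — 8 statements merged into one kernel-verified Lean document; each statement's English description precedes it below -/
import Mathlib

section
/- Let K be an n×n real symmetric positive definite matrix and α > 0. For a subset C ⊆ {1,…,n}, assign it the probability Pr(C) = det((K/α)_{CC}) / det(I + K/α) (with the convention det of the empty submatrix equals 1). Then the expectation over subsets sampled with these probabilities satisfies ∑_{C ⊆ {1,…,n}} Pr(C) · C K_{CC}^{-1} Cᵀ = (K + αI)^{-1}, where for the empty subset the matrix C K_{CC}^{-1} Cᵀ is the n×n zero matrix. -/
open Matrix BigOperators Finset

/-- The `n × |C|` sampling matrix obtained by selecting the columns of the identity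
matrix indexed by `C`. -/
def sampMatrix {n : ℕ} (C : Finset (Fin n)) : Matrix (Fin n) {x // x ∈ C} ℝ :=
  fun i j => if i = (j : Fin n) then 1 else 0

/-- The principal submatrix `K_{CC}` of `K` with rows and columns indexed by `C`. -/
def principalSub {n : ℕ} (K : Matrix (Fin n) (Fin n) ℝ) (C : Finset (Fin n)) :
    Matrix {x // x ∈ C} {x // x ∈ C} ℝ :=
  fun i j => K i j

lemma samp_entry {n : ℕ} (C : Finset (Fin n)) (M : Matrix {x // x ∈ C} {x // x ∈ C} ℝ)
    (i l : Fin n) :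
    (sampMatrix C * M * (sampMatrix C)ᵀ) i l
      = if h : i ∈ C ∧ l ∈ C then M ⟨i, h.1⟩ ⟨l, h.2⟩ else 0 := by
  simp only [Matrix.mul_apply, Matrix.transpose_apply, sampMatrix]
  have hrow : ∀ (b : {x // x ∈ C}),
      (∑ a : {x // x ∈ C}, (if i = (a : Fin n) then (1:ℝ) else 0) * M a b)
        = if h : i ∈ C then M ⟨i, h⟩ b else 0 := by
    intro b
    by_cases h : i ∈ C
    · rw [dif_pos h, Finset.sum_eq_single (⟨i, h⟩ : {x // x ∈ C})]
      · simp
      · intro a _ ha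
        rw [if_neg, zero_mul]
        intro hia; exact ha (Subtype.ext hia.symm)
      · simp
    · rw [dif_neg h, Finset.sum_eq_zero]
      intro a _
      rw [if_neg, zero_mul]
      intro hia; exact h (hia ▸ a.2)
  simp only [hrow]
  by_cases hi : i ∈ C
  · simp only [dif_pos hi]
    by_cases hl : l ∈ C
    · rw [dif_pos ⟨hi, hl⟩, Finset.sum_eq_single (⟨l, hl⟩ : {x // x ∈ C})]
      · simp
      · intro b _ hb
        rw [if_neg, mul_zero]
        intro hlb; exact hb (Subtype.ext hlb.symm)
      · simp
    · rw [dif_neg (by tauto), Finset.sum_eq_zero]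
      intro b _
      rw [if_neg, mul_zero]
      intro hlb; exact hl (hlb ▸ b.2)
  · rw [dif_neg (by tauto), Finset.sum_eq_zero]
    intro b _
    rw [dif_neg hi, zero_mul]

lemma principalSub_posDef {n : ℕ} {K : Matrix (Fin n) (Fin n) ℝ} (hPD : K.PosDef)
    (C : Finset (Fin n)) : (principalSub K C).PosDef := by
  classical
  refine posDef_iff_dotProduct_mulVec.mpr ⟨?_, ?_⟩
  · ext a b
    simp only [conjTranspose_apply, principalSub, star_trivial]
    exact hPD.1.apply (a : Fin n) (b : Fin n)
  · intro x hx
    set y : Fin n → ℝ := fun j => if h : j ∈ C then x ⟨j, h⟩ else 0 with hy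
    have hyne : y ≠ 0 := by
      intro h0
      apply hx
      funext a
      have := congrFun h0 (a : Fin n)
      simpa [hy, a.2] using this
    have hyzero : ∀ j ∉ C, y j = 0 := fun j hj => by simp [hy, hj]
    have inner : ∀ j : Fin n, (∑ k, K j k * y k) = ∑ b : {x // x ∈ C}, K j b * x b := by
      intro j
      calc (∑ k, K j k * y k) = ∑ k ∈ C, K j k * y k :=
            (Finset.sum_subset (Finset.subset_univ C)
              (fun k _ hk => by rw [hyzero k hk, mul_zero])).symm
        _ = ∑ k ∈ C.attach, K j (k : Fin n) * y (k : Fin n) := (Finset.sum_attach C _).symm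
        _ = ∑ b : {x // x ∈ C}, K j b * x b := by
            rw [← Finset.univ_eq_attach]
            exact Finset.sum_congr rfl (fun b _ => by rw [hy]; simp [b.2])
    have key : star y ⬝ᵥ (K *ᵥ y) = star x ⬝ᵥ (principalSub K C *ᵥ x) := by
      simp only [dotProduct, Matrix.mulVec, dotProduct, Pi.star_apply, star_trivial]
      calc (∑ j, y j * ∑ k, K j k * y k) = ∑ j ∈ C, y j * ∑ k, K j k * y k :=
            (Finset.sum_subset (Finset.subset_univ C)
              (fun j _ hj => by rw [hyzero j hj, zero_mul])).symm
        _ = ∑ j ∈ C.attach, y (j : Fin n) * ∑ k, K (j : Fin n) k * y k :=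
            (Finset.sum_attach C _).symm
        _ = ∑ a : {x // x ∈ C}, x a * ∑ b : {x // x ∈ C}, principalSub K C a b * x b := by
            rw [← Finset.univ_eq_attach]
            refine Finset.sum_congr rfl (fun a _ => ?_)
            rw [inner (a : Fin n)]
            have : y (a : Fin n) = x a := by rw [hy]; simp [a.2]
            rw [this]
            rfl
    have := hPD.dotProduct_mulVec_pos hyne
    rw [key] at this
    exact this

lemma det_term {n : ℕ} (K : Matrix (Fin n) (Fin n) ℝ) (α : ℝ) (i l : Fin n)
    (s : Finset (Fin n)) :
    Matrix.det (Matrix.of (s.piecewise (fun r => if r = l then Pi.single i 1 else K r)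
        (fun r => if r = l then 0 else α • (Pi.single r 1 : Fin n → ℝ))))
    = α ^ (n - s.card) *
        (if h : i ∈ s ∧ l ∈ s then (principalSub K s).adjugate ⟨i, h.1⟩ ⟨l, h.2⟩ else 0) := by
  classical
  set a : Fin n → Fin n → ℝ := fun r => if r = l then Pi.single i 1 else K r with ha
  set b : Fin n → Fin n → ℝ := fun r => if r = l then 0 else α • (Pi.single r 1 : Fin n → ℝ) with hb
  by_cases hl : l ∈ s
  · -- factor out α from rows outside s
    set b' : Fin n → Fin n → ℝ := fun r => Pi.single r (1:ℝ) with hb'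
    have hfac : (s.piecewise a b) =
        fun r => (if r ∈ s then (1:ℝ) else α) • (s.piecewise a b') r := by
      funext r
      by_cases hr : r ∈ s
      · simp [Finset.piecewise, hr]
      · have hrl : r ≠ l := fun h => hr (h ▸ hl)
        simp [Finset.piecewise, hr, hb, hb', hrl]
    have hsmul : Matrix.det (Matrix.of (s.piecewise a b))
        = (∏ r : Fin n, (if r ∈ s then (1:ℝ) else α)) *
            Matrix.det (Matrix.of (s.piecewise a b')) := by
      rw [hfac]
      exact Matrix.detRowAlternating.toMultilinearMap.map_smul_univ
        (fun r => if r ∈ s then (1:ℝ) else α) (s.piecewise a b')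
    have hprod : (∏ r : Fin n, (if r ∈ s then (1:ℝ) else α)) = α ^ (n - s.card) := by
      rw [← Finset.prod_mul_prod_compl s]
      rw [Finset.prod_congr rfl (fun r hr => if_pos hr), Finset.prod_const_one, one_mul]
      rw [Finset.prod_congr rfl (fun r hr => if_neg (Finset.mem_compl.mp hr)),
        Finset.prod_const, Finset.card_compl, Fintype.card_fin]
    -- block structure
    set e := Equiv.sumCompl (· ∈ s) with he
    have hblock : (Matrix.of (s.piecewise a b')).submatrix e e
        = Matrix.fromBlocks (Matrix.of fun u v => a u.val v.val) (Matrix.of fun u v => a u.val v.val) 0 1 := by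
      ext r c
      cases r with
      | inl u =>
        cases c with
        | inl v =>
          simp only [Matrix.submatrix_apply, he, Equiv.sumCompl_apply_inl,
            Matrix.fromBlocks_apply₁₁, Matrix.of_apply, Finset.piecewise, u.2, if_pos]
        | inr v =>
          simp only [Matrix.submatrix_apply, he, Equiv.sumCompl_apply_inl,
            Equiv.sumCompl_apply_inr, Matrix.fromBlocks_apply₁₂, Matrix.of_apply,
            Finset.piecewise, u.2, if_pos]
      | inr u =>
        cases c with
        | inl v =>
          have : (v : Fin n) ≠ (u : Fin n) := fun h => u.2 (h ▸ v.2)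
          simp only [Matrix.submatrix_apply, he, Equiv.sumCompl_apply_inl,
            Equiv.sumCompl_apply_inr, Matrix.fromBlocks_apply₂₁, Matrix.of_apply,
            Finset.piecewise, u.2, if_neg, hb', Pi.single_apply, Matrix.zero_apply]
          simp [u.2, this]
        | inr v =>
          have : ((1 : Matrix {x // ¬ x ∈ s} {x // ¬ x ∈ s} ℝ) u v)
              = (Pi.single (u : Fin n) 1 : Fin n → ℝ) (v : Fin n) := by
            rw [Pi.single_apply, Matrix.one_apply]
            simp [eq_comm, Subtype.ext_iff]
          simp only [Matrix.submatrix_apply, he, Equiv.sumCompl_apply_inr,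
            Matrix.fromBlocks_apply₂₂, Matrix.of_apply, Finset.piecewise, u.2, if_neg]
          simp [u.2, hb', this]
    have hdet' : Matrix.det (Matrix.of (s.piecewise a b'))
        = Matrix.det (Matrix.of fun (u v : {x // x ∈ s}) => a u.val v.val) := by
      rw [← Matrix.det_submatrix_equiv_self e, hblock, Matrix.det_fromBlocks_zero₂₁,
        Matrix.det_one, mul_one]
    rw [hsmul, hprod, hdet']
    congr 1
    by_cases hi : i ∈ s
    · rw [dif_pos ⟨hi, hl⟩, Matrix.adjugate_apply]
      congr 1
      ext u v
      rw [Matrix.updateRow_apply]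
      by_cases hu : u = (⟨l, hl⟩ : {x // x ∈ s})
      · rw [if_pos hu]
        have h1 : (u : Fin n) = l := by rw [hu]
        simp only [Matrix.of_apply, ha, if_pos h1]
        rw [Pi.single_apply, Pi.single_apply]
        simp [Subtype.ext_iff]
      · rw [if_neg hu]
        have h1 : (u : Fin n) ≠ l := fun h => hu (Subtype.ext h)
        simp only [Matrix.of_apply, ha, if_neg h1]
        rfl
    · rw [dif_neg (fun h => hi h.1)]
      apply Matrix.det_eq_zero_of_row_eq_zero (⟨l, hl⟩ : {x // x ∈ s})
      intro v
      have h1 : ((⟨l, hl⟩ : {x // x ∈ s}) : Fin n) = l := rfl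
      simp only [Matrix.of_apply, ha, if_pos h1, if_true]
      rw [Pi.single_apply, if_neg]
      exact fun h => hi (h ▸ v.2)
  · -- l ∉ s : row l is zero
    rw [dif_neg (fun h => hl h.2), mul_zero]
    apply Matrix.det_eq_zero_of_row_eq_zero l
    intro j
    have : s.piecewise a b l = b l := Finset.piecewise_eq_of_notMem _ _ _ hl
    rw [Matrix.of_apply, this, hb]
    simp


lemma adjugate_expansion {n : ℕ} (K : Matrix (Fin n) (Fin n) ℝ) (α : ℝ) (i l : Fin n) :
    (K + α • (1 : Matrix (Fin n) (Fin n) ℝ)).adjugate i l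
      = ∑ C : Finset (Fin n), α ^ (n - C.card) *
          (if h : i ∈ C ∧ l ∈ C then (principalSub K C).adjugate ⟨i, h.1⟩ ⟨l, h.2⟩ else 0) := by
  classical
  rw [Matrix.adjugate_apply]
  set a : Fin n → Fin n → ℝ := fun r => if r = l then Pi.single i 1 else K r with ha
  set b : Fin n → Fin n → ℝ :=
    fun r => if r = l then 0 else α • (Pi.single r 1 : Fin n → ℝ) with hb
  have hM : ((K + α • (1 : Matrix (Fin n) (Fin n) ℝ)).updateRow l (Pi.single i 1))
      = Matrix.of (a + b) := by
    ext r c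
    rw [Matrix.updateRow_apply]
    by_cases hr : r = l
    · simp [ha, hb, hr]
    · simp only [if_neg hr, Matrix.of_apply, Pi.add_apply, ha, hb, if_neg hr,
        Matrix.add_apply, Matrix.smul_apply, Matrix.one_apply, Pi.smul_apply,
        Pi.single_apply, smul_eq_mul]
      congr 1
      congr 1
      simp [eq_comm]
  rw [hM]
  have expand : Matrix.det (Matrix.of (a + b))
      = ∑ s : Finset (Fin n), Matrix.det (Matrix.of (s.piecewise a b)) :=
    Matrix.detRowAlternating.toMultilinearMap.map_add_univ a b
  rw [expand]
  exact Finset.sum_congr rfl fun s _ => det_term K α i l s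


/-- Implicit regularization for DPP sampling: if each subset `C` receives probability
`det((K/α)_{CC}) / det(I + K/α)`, then the expectation of `C K_{CC}⁻¹ Cᵀ` equals
`(K + αI)⁻¹`. -/
theorem dpp_expectation_eq_inv_add_smul_one (n : ℕ) (K : Matrix (Fin n) (Fin n) ℝ)
    (hsymm : K.IsSymm) (hPD : K.PosDef) (α : ℝ) (hα : 0 < α) :
    ∑ C : Finset (Fin n),
        ((principalSub (α⁻¹ • K) C).det / (1 + α⁻¹ • K).det) •
          (sampMatrix C * (principalSub K C)⁻¹ * (sampMatrix C)ᵀ) =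
      (K + α • (1 : Matrix (Fin n) (Fin n) ℝ))⁻¹ := by

  classical
  set A := K + α • (1 : Matrix (Fin n) (Fin n) ℝ) with hA
  have hαne : α ≠ 0 := hα.ne'
  have hAPD : A.PosDef := by
    refine posDef_iff_dotProduct_mulVec.mpr ⟨?_, ?_⟩
    · show Aᴴ = A
      rw [hA, Matrix.conjTranspose_add, Matrix.conjTranspose_smul, Matrix.conjTranspose_one,
        hPD.1]
      simp
    · intro x hx
      have h1 : star x ⬝ᵥ (A *ᵥ x) = star x ⬝ᵥ (K *ᵥ x) + α * (star x ⬝ᵥ x) := by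
        rw [hA, Matrix.add_mulVec, dotProduct_add, Matrix.smul_mulVec,
          Matrix.one_mulVec, dotProduct_smul, smul_eq_mul]
      rw [h1]
      have h2 : 0 < star x ⬝ᵥ (K *ᵥ x) := hPD.dotProduct_mulVec_pos hx
      have h3 : 0 ≤ star x ⬝ᵥ x := by
        simpa [dotProduct] using Finset.sum_nonneg fun j _ => mul_self_nonneg (x j)
      nlinarith
  have hdA : (0:ℝ) < A.det := hAPD.det_pos
  have hdet1 : (1 + α⁻¹ • K : Matrix (Fin n) (Fin n) ℝ).det = α⁻¹ ^ n * A.det := by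
    have : (1 + α⁻¹ • K : Matrix (Fin n) (Fin n) ℝ) = α⁻¹ • A := by
      rw [hA, smul_add, smul_smul, inv_mul_cancel₀ hαne, one_smul, add_comm]
    rw [this, Matrix.det_smul, Fintype.card_fin]
  ext i l
  rw [Matrix.sum_apply]
  rw [Matrix.inv_def, Matrix.smul_apply, Ring.inverse_eq_inv, smul_eq_mul,
    adjugate_expansion, Finset.mul_sum]
  refine Finset.sum_congr rfl fun C _ => ?_
  have hCcard : C.card ≤ n := by
    simpa [Fintype.card_fin] using Finset.card_le_univ C
  have hCPD := principalSub_posDef hPD C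
  have hdC : (0:ℝ) < (principalSub K C).det := hCPD.det_pos
  have hdetC : (principalSub (α⁻¹ • K) C).det = α⁻¹ ^ C.card * (principalSub K C).det := by
    have h1 : principalSub (α⁻¹ • K) C = α⁻¹ • principalSub K C := by
      ext u v; simp [principalSub]
    rw [h1, Matrix.det_smul, Fintype.card_coe]
  rw [Matrix.smul_apply, smul_eq_mul, samp_entry, hdetC, hdet1]
  by_cases h : i ∈ C ∧ l ∈ C
  · rw [dif_pos h, dif_pos h]
    rw [Matrix.inv_def, Matrix.smul_apply, Ring.inverse_eq_inv, smul_eq_mul]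
    have hpow : α⁻¹ ^ n = α⁻¹ ^ C.card * α⁻¹ ^ (n - C.card) := by
      rw [← pow_add, Nat.add_sub_cancel' hCcard]
    rw [hpow]
    set dC := (principalSub K C).det
    set dA := A.det
    set aE := (principalSub K C).adjugate ⟨i, h.1⟩ ⟨l, h.2⟩
    have hαipow : α⁻¹ ^ (n - C.card) = (α ^ (n - C.card))⁻¹ := by rw [inv_pow]
    field_simp
    rw [one_div, mul_right_comm, ← mul_pow, inv_mul_cancel₀ hαne, one_pow, one_mul]
  · rw [dif_neg h, dif_neg h, mul_zero, mul_zero, mul_zero]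
end

section
/- Let K be an n×n real symmetric positive definite matrix and α > 0, and for C ⊆ {1,…,n} let Pr(C) = det((K/α)_{CC}) / det(I + K/α). Then the expected subset size satisfies ∑_{C ⊆ {1,…,n}} Pr(C) · |C| = Tr(K(K + αI)^{-1}). -/
open Matrix BigOperators Finset

lemma det_piecewise_one {n : ℕ} (A : Matrix (Fin n) (Fin n) ℝ) (s : Finset (Fin n)) :
    (Matrix.of (s.piecewise (A : Fin n → Fin n → ℝ) (1 : Matrix (Fin n) (Fin n) ℝ))).det
      = (principalSub A s).det := by
  classical
  have he := Matrix.det_submatrix_equiv_self (Equiv.sumCompl (· ∈ s))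
    (Matrix.of (s.piecewise (A : Fin n → Fin n → ℝ) (1 : Matrix (Fin n) (Fin n) ℝ)))
  rw [← he]
  have hblock : (Matrix.of (s.piecewise (A : Fin n → Fin n → ℝ)
      (1 : Matrix (Fin n) (Fin n) ℝ))).submatrix (Equiv.sumCompl (· ∈ s))
        (Equiv.sumCompl (· ∈ s)) =
      Matrix.fromBlocks (principalSub A s)
        (Matrix.of fun (i : {x // x ∈ s}) (j : {x // ¬ x ∈ s}) => A i.1 j.1) 0 1 := by
    ext i j
    cases i with
    | inl i =>
      cases j with
      | inl j =>
        simp [Finset.piecewise, i.2, principalSub]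
      | inr j =>
        simp [Finset.piecewise, i.2]
    | inr i =>
      cases j with
      | inl j =>
        have hne : i.1 ≠ j.1 := by
          intro h; exact i.2 (h ▸ j.2)
        simp [Finset.piecewise, i.2, Matrix.one_apply, hne]
      | inr j =>
        have hij : (i.1 = j.1) = (i = j) := by
          simp [Subtype.ext_iff]
        simp [Finset.piecewise, i.2, Matrix.one_apply, hij]
  rw [hblock, Matrix.det_fromBlocks_zero₂₁, Matrix.det_one, mul_one]

lemma det_one_add_eq_sum {n : ℕ} (A : Matrix (Fin n) (Fin n) ℝ) :
    (1 + A).det = ∑ C : Finset (Fin n), (principalSub A C).det := by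
  classical
  have h2 := (Matrix.detRowAlternating :
      (Fin n → ℝ) [⋀^Fin n]→ₗ[ℝ] ℝ).toMultilinearMap.map_add_univ
        (A : Fin n → Fin n → ℝ) ((1 : Matrix (Fin n) (Fin n) ℝ) : Fin n → Fin n → ℝ)
  calc (1 + A).det
      = (Matrix.detRowAlternating :
          (Fin n → ℝ) [⋀^Fin n]→ₗ[ℝ] ℝ).toMultilinearMap
            ((A : Fin n → Fin n → ℝ) + ((1 : Matrix (Fin n) (Fin n) ℝ) : Fin n → Fin n → ℝ)) := by
        rw [add_comm]; rfl
    _ = ∑ s : Finset (Fin n),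
          (Matrix.detRowAlternating :
            (Fin n → ℝ) [⋀^Fin n]→ₗ[ℝ] ℝ).toMultilinearMap
              (s.piecewise (A : Fin n → Fin n → ℝ)
                ((1 : Matrix (Fin n) (Fin n) ℝ) : Fin n → Fin n → ℝ)) := h2
    _ = ∑ C : Finset (Fin n), (principalSub A C).det :=
        Finset.sum_congr rfl fun s _ => det_piecewise_one A s

lemma principalSub_updateRow_notMem {n : ℕ} (A : Matrix (Fin n) (Fin n) ℝ)
    (i : Fin n) (C : Finset (Fin n)) (hi : i ∉ C) :
    principalSub (A.updateRow i 0) C = principalSub A C := by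
  ext a b
  have : (a : Fin n) ≠ i := fun h => hi (h ▸ a.2)
  simp [principalSub, Matrix.updateRow_ne this]

lemma principalSub_updateRow_mem {n : ℕ} (A : Matrix (Fin n) (Fin n) ℝ)
    (i : Fin n) (C : Finset (Fin n)) (hi : i ∈ C) :
    (principalSub (A.updateRow i 0) C).det = 0 := by
  apply Matrix.det_eq_zero_of_row_eq_zero ⟨i, hi⟩
  intro j
  simp [principalSub]

lemma one_add_updateRow {n : ℕ} (A : Matrix (Fin n) (Fin n) ℝ) (i : Fin n) :
    1 + A.updateRow i 0 = (1 + A).updateRow i (Pi.single i 1) := by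
  ext k j
  by_cases hk : k = i
  · subst hk
    simp [Matrix.updateRow_self, Matrix.one_apply, Pi.single_apply, eq_comm]
  · simp [Matrix.updateRow_ne hk]

/-- Expected subset size of the DPP with L-ensemble `K/α`: if each subset `C` receives
probability `det((K/α)_{CC}) / det(I + K/α)`, then the expected cardinality equals
`Tr(K (K + αI)⁻¹)`. -/
theorem dpp_expected_size_eq_trace (n : ℕ) (K : Matrix (Fin n) (Fin n) ℝ)
    (hsymm : K.IsSymm) (hPD : K.PosDef) (α : ℝ) (hα : 0 < α) :
    ∑ C : Finset (Fin n),
        ((principalSub (α⁻¹ • K) C).det / (1 + α⁻¹ • K).det) * (C.card : ℝ) =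
      (K * (K + α • (1 : Matrix (Fin n) (Fin n) ℝ))⁻¹).trace := by
  classical
  set L : Matrix (Fin n) (Fin n) ℝ := α⁻¹ • K with hL
  have hαinv : (0:ℝ) < α⁻¹ := inv_pos.mpr hα
  -- L is positive definite
  have hLpd : L.PosDef := by
    constructor
    · show Lᴴ = L
      rw [hL, Matrix.conjTranspose_smul]
      rw [hPD.isHermitian.eq]
      norm_num
    · intro x hx
      exact (hPD.smul hαinv).2 hx
  have h1Lpd : (1 + L).PosDef := Matrix.PosDef.one.add hLpd
  set D : ℝ := (1 + L).det with hD
  have hD0 : 0 < D := h1Lpd.det_pos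
  have hsum : D = ∑ C : Finset (Fin n), (principalSub L C).det := det_one_add_eq_sum L
  -- trace of adjugate
  have htr : (Matrix.adjugate (1 + L)).trace
      = ∑ C : Finset (Fin n), ((n : ℝ) - (C.card : ℝ)) * (principalSub L C).det := by
    rw [Matrix.trace]
    have hterm : ∀ i : Fin n, (Matrix.adjugate (1 + L)).diag i
        = ∑ C : Finset (Fin n), if i ∈ C then 0 else (principalSub L C).det := by
      intro i
      rw [Matrix.diag_apply, Matrix.adjugate_apply, ← one_add_updateRow,
        det_one_add_eq_sum]
      refine Finset.sum_congr rfl fun C _ => ?_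
      by_cases hi : i ∈ C
      · rw [principalSub_updateRow_mem L i C hi, if_pos hi]
      · rw [principalSub_updateRow_notMem L i C hi, if_neg hi]
    rw [Finset.sum_congr rfl fun i _ => hterm i, Finset.sum_comm]
    refine Finset.sum_congr rfl fun C _ => ?_
    rw [Finset.sum_ite, Finset.sum_const, Finset.sum_const, smul_zero, zero_add]
    have hcard : (Finset.univ.filter (fun i => ¬ i ∈ C)).card = n - C.card := by
      have hcc : Finset.univ.filter (fun i => ¬ i ∈ C) = Cᶜ := by
        ext i; simp
      rw [hcc, Finset.card_compl, Fintype.card_fin]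
    have hle : C.card ≤ n := by
      simpa using Finset.card_le_univ C
    rw [hcard, nsmul_eq_mul, Nat.cast_sub hle, mul_comm]
  -- sum with cardinality
  have hS : ∑ C : Finset (Fin n), (principalSub L C).det * (C.card : ℝ)
      = (n : ℝ) * D - (Matrix.adjugate (1 + L)).trace := by
    rw [htr, hsum, Finset.mul_sum, ← Finset.sum_sub_distrib]
    refine Finset.sum_congr rfl fun C _ => ?_
    ring
  -- the inverse of K + α•1
  have hKa : K + α • (1 : Matrix (Fin n) (Fin n) ℝ) = α • (1 + L) := by
    rw [hL, smul_add, smul_smul, mul_inv_cancel₀ hα.ne', one_smul, add_comm]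
  have hdetu : IsUnit (1 + L).det := (isUnit_iff_ne_zero.mpr hD0.ne')
  have hinv : (K + α • (1 : Matrix (Fin n) (Fin n) ℝ))⁻¹ = α⁻¹ • (1 + L)⁻¹ := by
    apply Matrix.inv_eq_right_inv
    rw [hKa, Matrix.smul_mul, Matrix.mul_smul, smul_smul, mul_inv_cancel₀ hα.ne',
      one_smul, Matrix.mul_nonsing_inv _ hdetu]
  -- compute the trace
  have htrace : (K * (K + α • (1 : Matrix (Fin n) (Fin n) ℝ))⁻¹).trace
      = D⁻¹ * ((n : ℝ) * D - (Matrix.adjugate (1 + L)).trace) := by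
    have hmul : L * Matrix.adjugate (1 + L)
        = D • (1 : Matrix (Fin n) (Fin n) ℝ) - Matrix.adjugate (1 + L) := by
      have h := Matrix.mul_adjugate (1 + L)
      rw [add_mul, Matrix.one_mul] at h
      exact eq_sub_of_add_eq' h
    rw [hinv, Matrix.mul_smul, ← Matrix.smul_mul, ← hL]
    rw [Matrix.inv_def, Ring.inverse_eq_inv]
    rw [Matrix.mul_smul, Matrix.trace_smul, hmul, Matrix.trace_sub,
      Matrix.trace_smul, Matrix.trace_one]
    simp only [smul_eq_mul, Fintype.card_fin, ← hD]
    ring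
  rw [htrace, ← hS, Finset.mul_sum]
  refine Finset.sum_congr rfl fun C _ => ?_
  rw [div_eq_mul_inv]
  ring
end

section
/- Let K be an n×n real symmetric positive definite matrix, α > 0, and for C ⊆ {1,…,n} let Pr(C) = det((K/α)_{CC}) / det(I + K/α). Then for all vectors k_x, y ∈ ℝⁿ, the averaged ridgeless predictor satisfies ∑_{C ⊆ {1,…,n}} Pr(C) · k_xᵀ C K_{CC}^{-1} Cᵀ y = k_xᵀ (K + αI)^{-1} y (with the term for the empty subset equal to 0). -/
open Matrix BigOperators Finset

namespace DPPAux

variable {n : ℕ}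

lemma samp_conj {C : Finset (Fin n)} (B : Matrix {x // x ∈ C} {x // x ∈ C} ℝ)
    (i j : Fin n) :
    (sampMatrix C * B * (sampMatrix C)ᵀ) i j
      = if h : i ∈ C ∧ j ∈ C then B ⟨i, h.1⟩ ⟨j, h.2⟩ else 0 := by
  classical
  rw [Matrix.mul_apply]
  have hb : ∀ b : {x // x ∈ C},
      (sampMatrix C * B) i b = if h : i ∈ C then B ⟨i, h⟩ b else 0 := by
    intro b
    rw [Matrix.mul_apply]
    split_ifs with h
    · rw [Finset.sum_eq_single (⟨i, h⟩ : {x // x ∈ C})]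
      · simp [sampMatrix]
      · intro a _ ha
        have : i ≠ ↑a := fun e => ha (Subtype.ext e.symm)
        simp [sampMatrix, this]
      · simp
    · apply Finset.sum_eq_zero
      intro a _
      have : i ≠ ↑a := fun e => h (e ▸ a.2)
      simp [sampMatrix, this]
  simp_rw [hb, Matrix.transpose_apply]
  by_cases hi : i ∈ C
  · simp only [dif_pos hi]
    by_cases hj : j ∈ C
    · rw [dif_pos ⟨hi, hj⟩, Finset.sum_eq_single (⟨j, hj⟩ : {x // x ∈ C})]
      · simp [sampMatrix]
      · intro a _ ha
        have : j ≠ ↑a := fun e => ha (Subtype.ext e.symm)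
        simp [sampMatrix, this]
      · simp
    · rw [dif_neg (by tauto)]
      apply Finset.sum_eq_zero
      intro a _
      have : j ≠ ↑a := fun e => hj (e ▸ a.2)
      simp [sampMatrix, this]
  · rw [dif_neg (by tauto)]
    apply Finset.sum_eq_zero
    intro a _
    rw [dif_neg hi, zero_mul]

lemma conj_samp (K : Matrix (Fin n) (Fin n) ℝ) (C : Finset (Fin n)) :
    (sampMatrix C)ᵀ * K * sampMatrix C = principalSub K C := by
  classical
  ext a b
  rw [Matrix.mul_apply]
  have h1 : ∀ l, ((sampMatrix C)ᵀ * K) a l = K ↑a l := by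
    intro l
    rw [Matrix.mul_apply]
    rw [Finset.sum_eq_single (↑a : Fin n)]
    · simp [sampMatrix]
    · intro k _ hk
      simp [sampMatrix, hk]
    · simp
  simp_rw [h1]
  rw [Finset.sum_eq_single (↑b : Fin n)]
  · simp [sampMatrix, principalSub]
  · intro l _ hl
    simp [sampMatrix, hl]
  · simp

lemma posDef_principalSub {K : Matrix (Fin n) (Fin n) ℝ} (hPD : K.PosDef)
    (C : Finset (Fin n)) : (principalSub K C).PosDef := by
  classical
  refine Matrix.posDef_iff_dotProduct_mulVec.mpr ⟨?_, ?_⟩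
  · have hK := hPD.1
    ext a b
    have := congrFun (congrFun hK (↑a : Fin n)) (↑b : Fin n)
    simpa [Matrix.conjTranspose_apply, principalSub] using this
  · intro x hx
    have hx' : (sampMatrix C) *ᵥ x ≠ 0 := by
      obtain ⟨a, ha⟩ := Function.ne_iff.mp hx
      intro h0
      apply ha
      have h2 : ((sampMatrix C) *ᵥ x) ↑a = x a := by
        simp [Matrix.mulVec, dotProduct, sampMatrix, Subtype.coe_inj,
          Finset.sum_ite_eq]
      rw [h0] at h2
      simpa using h2.symm
    have hq := hPD.dotProduct_mulVec_pos hx'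
    have heq : star x ⬝ᵥ (principalSub K C) *ᵥ x
        = star ((sampMatrix C) *ᵥ x) ⬝ᵥ K *ᵥ ((sampMatrix C) *ᵥ x) := by
      rw [← conj_samp K C, star_trivial, star_trivial]
      rw [← Matrix.mulVec_mulVec, ← Matrix.mulVec_mulVec, Matrix.dotProduct_mulVec,
        Matrix.vecMul_transpose]
    rw [heq]
    exact hq

/-- Determinant of a matrix whose rows on `s` are unit vectors. -/
lemma det_unitRows (A M : Matrix (Fin n) (Fin n) ℝ) (s : Finset (Fin n))
    (hM1 : ∀ k ∈ s, ∀ l, M k l = if l = k then (1 : ℝ) else 0)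
    (hM2 : ∀ k ∉ s, M k = A k) :
    M.det = (principalSub A sᶜ).det := by
  have hcond : ∀ i, (i ∈ s) → ∀ j, ¬ (j ∈ s) → M i j = 0 := by
    intro i hi j hj
    rw [hM1 i hi j, if_neg (fun e : j = i => hj (e ▸ hi))]
  let e : {k : Fin n // ¬ k ∈ s} ≃ {x : Fin n // x ∈ sᶜ} :=
    Equiv.subtypeEquivRight (fun x => (Finset.mem_compl (s := s)).symm)
  have h1 : Matrix.toSquareBlockProp M (fun k => k ∈ s)
      = (1 : Matrix {k // k ∈ s} {k // k ∈ s} ℝ) := by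
    ext a b
    rw [Matrix.toSquareBlockProp, Matrix.toBlock_apply, hM1 _ a.2, Matrix.one_apply]
    by_cases h : a = b
    · subst h; simp
    · rw [if_neg h, if_neg (fun e2 : (b : Fin n) = (a : Fin n) => h (Subtype.ext e2.symm))]
  have h2 : Matrix.toSquareBlockProp M (fun k => ¬ k ∈ s)
      = (principalSub A sᶜ).submatrix e e := by
    ext a b
    rw [Matrix.toSquareBlockProp, Matrix.toBlock_apply, Matrix.submatrix_apply, hM2 _ a.2]
    rfl
  have hd1 : ∀ (D : DecidableEq {k : Fin n // k ∈ s}) (F : Fintype {k : Fin n // k ∈ s}),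
      @Matrix.det _ D F ℝ _ (1 : Matrix {k : Fin n // k ∈ s} {k : Fin n // k ∈ s} ℝ) = 1 := by
    intro D F
    obtain rfl : D = Subtype.instDecidableEq := Subsingleton.elim _ _
    obtain rfl : F = Finset.Subtype.fintype s := Subsingleton.elim _ _
    exact Matrix.det_one
  have hd2 : ∀ (D : DecidableEq {k : Fin n // ¬ k ∈ s}) (F : Fintype {k : Fin n // ¬ k ∈ s}),
      @Matrix.det _ D F ℝ _ ((principalSub A sᶜ).submatrix e e) = (principalSub A sᶜ).det := by
    intro D F
    obtain rfl : D = Subtype.instDecidableEq := Subsingleton.elim _ _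
    obtain rfl : F = Subtype.fintype _ := Subsingleton.elim _ _
    exact Matrix.det_submatrix_equiv_self e _
  rw [Matrix.twoBlockTriangular_det' M (fun k => k ∈ s) hcond, h1, h2, hd1, hd2, one_mul]

/-- Expansion of `det (A + diagonal d)` as a sum over principal minors. -/
lemma det_expand (A : Matrix (Fin n) (Fin n) ℝ) (d : Fin n → ℝ) :
    (A + Matrix.diagonal d).det
      = ∑ C : Finset (Fin n), (∏ k ∈ Cᶜ, d k) * (principalSub A C).det := by
  classical
  have h0 : (A + Matrix.diagonal d).det
      = ∑ s : Finset (Fin n),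
          Matrix.detRowAlternating (s.piecewise (Matrix.diagonal d) A) := by
    rw [add_comm]
    exact Matrix.detRowAlternating.toMultilinearMap.map_add_univ (Matrix.diagonal d) A
  have h1 : ∀ s : Finset (Fin n),
      Matrix.detRowAlternating (s.piecewise (Matrix.diagonal d) A)
        = (∏ k ∈ s, d k) * (principalSub A sᶜ).det := by
    intro s
    set m : Fin n → (Fin n → ℝ) := s.piecewise (fun k => Pi.single k (1 : ℝ)) A with hm
    have hpw : s.piecewise (Matrix.diagonal d) A = s.piecewise (fun i => d i • m i) m := by
      funext k
      by_cases hk : k ∈ s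
      · erw [Finset.piecewise_eq_of_mem _ _ _ hk, Finset.piecewise_eq_of_mem _ _ _ hk, hm,
          Finset.piecewise_eq_of_mem _ _ _ hk]
        funext l
        by_cases h : k = l
        · subst h; simp [Matrix.diagonal_apply]
        · simp [Matrix.diagonal_apply, Pi.single_apply, h, Ne.symm h]
      · erw [Finset.piecewise_eq_of_notMem _ _ _ hk, Finset.piecewise_eq_of_notMem _ _ _ hk,
          hm, Finset.piecewise_eq_of_notMem _ _ _ hk]
    rw [hpw]
    have h2 : Matrix.detRowAlternating (s.piecewise (fun i => d i • m i) m)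
        = (∏ i ∈ s, d i) • Matrix.detRowAlternating m :=
      Matrix.detRowAlternating.toMultilinearMap.map_piecewise_smul d m s
    rw [h2, smul_eq_mul]
    congr 1
    refine det_unitRows A m s ?_ ?_
    · intro k hk l
      erw [hm, Finset.piecewise_eq_of_mem _ _ _ hk, Pi.single_apply]
    · intro k hk
      erw [hm, Finset.piecewise_eq_of_notMem _ _ _ hk]
  rw [h0]
  simp_rw [h1]
  exact Fintype.sum_equiv ⟨fun s => sᶜ, fun s => sᶜ, compl_compl, compl_compl⟩ _ _
    (fun s => by simp only [Equiv.coe_fn_mk, compl_compl])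

lemma det_add_std {m : Type*} [DecidableEq m] [Fintype m] (M : Matrix m m ℝ) (i j : m) :
    (M + Matrix.single j i 1).det = M.det + M.adjugate i j := by
  have h : M + Matrix.single j i 1 = M.updateRow j (M j + Pi.single i 1) := by
    ext a b
    by_cases hab : a = j
    · subst hab
      simp [Matrix.updateRow_apply, Matrix.single, Pi.single_apply, and_comm,
        eq_comm]
    · have hne : ¬(j = a ∧ i = b) := fun e => hab e.1.symm
      simp [Matrix.updateRow_apply, Matrix.single, hab, hne]
  rw [h, Matrix.det_updateRow_add, Matrix.updateRow_eq_self, Matrix.adjugate_apply]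

/-- Expansion of the adjugate of `A + diagonal d` as a sum over principal minors. -/
lemma adj_expand (A : Matrix (Fin n) (Fin n) ℝ) (d : Fin n → ℝ) (i j : Fin n) :
    (A + Matrix.diagonal d).adjugate i j
      = ∑ C : Finset (Fin n), (∏ k ∈ Cᶜ, d k) *
          (if h : i ∈ C ∧ j ∈ C then (principalSub A C).adjugate ⟨i, h.1⟩ ⟨j, h.2⟩ else 0) := by
  classical
  have h3 : A + Matrix.single j i 1 + Matrix.diagonal d
      = (A + Matrix.diagonal d) + Matrix.single j i 1 := by abel
  have hadj : (A + Matrix.diagonal d).adjugate i j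
      = (A + Matrix.single j i 1 + Matrix.diagonal d).det
        - (A + Matrix.diagonal d).det := by
    rw [h3, det_add_std]; ring
  rw [hadj, det_expand, det_expand, ← Finset.sum_sub_distrib]
  apply Finset.sum_congr rfl
  intro C _
  rw [← mul_sub]
  congr 1
  by_cases h : i ∈ C ∧ j ∈ C
  · rw [dif_pos h]
    have hps : principalSub (A + Matrix.single j i 1) C
        = principalSub A C + Matrix.single (⟨j, h.2⟩ : {x // x ∈ C}) ⟨i, h.1⟩ 1 := by
      ext a b
      simp only [principalSub, Matrix.add_apply, Matrix.single, Matrix.of_apply]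
      congr 1
      simp [Subtype.ext_iff]
    rw [hps, det_add_std]
    ring
  · rw [dif_neg h]
    have hps : principalSub (A + Matrix.single j i 1) C = principalSub A C := by
      ext a b
      have hne : ¬(j = (a : Fin n) ∧ i = (b : Fin n)) := by
        rintro ⟨rfl, rfl⟩
        exact h ⟨b.2, a.2⟩
      simp [principalSub, Matrix.add_apply, Matrix.single, hne]
    rw [hps]
    ring

end DPPAux

open DPPAux in
/-- The averaged ridgeless predictor: if each subset `C` receives probability
`det((K/α)_{CC}) / det(I + K/α)`, then for all vectors `k_x, y`,
`E_C [k_xᵀ C K_{CC}⁻¹ Cᵀ y] = k_xᵀ (K + αI)⁻¹ y`. -/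
theorem dpp_expected_ridgeless_predictor (n : ℕ) (K : Matrix (Fin n) (Fin n) ℝ)
    (hsymm : K.IsSymm) (hPD : K.PosDef) (α : ℝ) (hα : 0 < α)
    (kx y : Fin n → ℝ) :
    ∑ C : Finset (Fin n),
        ((principalSub (α⁻¹ • K) C).det / (1 + α⁻¹ • K).det) *
          (kx ⬝ᵥ (sampMatrix C * (principalSub K C)⁻¹ * (sampMatrix C)ᵀ).mulVec y) =
      kx ⬝ᵥ (K + α • (1 : Matrix (Fin n) (Fin n) ℝ))⁻¹.mulVec y := by
  classical
  have hα0 : α ≠ 0 := ne_of_gt hα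
  -- rewrite `α • 1` as a diagonal matrix
  have hdiag : α • (1 : Matrix (Fin n) (Fin n) ℝ) = Matrix.diagonal (fun _ => α) := by
    ext i j
    by_cases h : i = j <;> simp [Matrix.one_apply, h]
  -- positive definiteness of `K + α • 1`
  have h1PD : (α • (1 : Matrix (Fin n) (Fin n) ℝ)).PosDef := by
    refine Matrix.posDef_iff_dotProduct_mulVec.mpr ⟨?_, ?_⟩
    · simp [Matrix.IsHermitian, Matrix.conjTranspose_smul]
    · intro x hx
      have hxx : 0 < star x ⬝ᵥ x := Matrix.dotProduct_star_self_pos_iff.mpr hx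
      have : star x ⬝ᵥ (α • (1 : Matrix (Fin n) (Fin n) ℝ)) *ᵥ x = α * (star x ⬝ᵥ x) := by
        rw [Matrix.smul_mulVec, Matrix.one_mulVec, dotProduct_smul, smul_eq_mul]
      rw [this]
      exact mul_pos hα hxx
  have hKα : (K + α • (1 : Matrix (Fin n) (Fin n) ℝ)).PosDef := hPD.add h1PD
  set β : ℝ := (K + α • (1 : Matrix (Fin n) (Fin n) ℝ)).det with hβ
  have hβpos : 0 < β := hKα.det_pos
  have hβ0 : β ≠ 0 := ne_of_gt hβpos
  -- reduce to a matrix identity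
  have key : ∀ (i j : Fin n),
      (∑ C : Finset (Fin n),
          ((principalSub (α⁻¹ • K) C).det / (1 + α⁻¹ • K).det) •
            (sampMatrix C * (principalSub K C)⁻¹ * (sampMatrix C)ᵀ)) i j
        = (K + α • (1 : Matrix (Fin n) (Fin n) ℝ))⁻¹ i j := by
    intro i j
    have hADJ : (K + α • (1 : Matrix (Fin n) (Fin n) ℝ)).adjugate i j
        = ∑ C : Finset (Fin n), (∏ k ∈ Cᶜ, α) *
            (if h : i ∈ C ∧ j ∈ C then
              (principalSub K C).adjugate ⟨i, h.1⟩ ⟨j, h.2⟩ else 0) := by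
      rw [hdiag]
      exact adj_expand K (fun _ => α) i j
    rw [Matrix.inv_def, Matrix.smul_apply, Ring.inverse_eq_inv, smul_eq_mul, hADJ, ← hβ]
    simp only [Matrix.sum_apply]
    rw [Finset.mul_sum]
    apply Finset.sum_congr rfl
    intro C _
    rw [Matrix.smul_apply, samp_conj, smul_eq_mul]
    have hdetC : 0 < (principalSub K C).det := (posDef_principalSub hPD C).det_pos
    have hdetC0 : (principalSub K C).det ≠ 0 := ne_of_gt hdetC
    -- weights
    have hw1 : (principalSub (α⁻¹ • K) C).det
        = α⁻¹ ^ C.card * (principalSub K C).det := by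
      have : principalSub (α⁻¹ • K) C = α⁻¹ • principalSub K C := by
        ext a b; simp [principalSub, Matrix.smul_apply]
      rw [this, Matrix.det_smul, Fintype.card_coe]
    have hw2 : (1 + α⁻¹ • K).det = α⁻¹ ^ n * β := by
      have : (1 : Matrix (Fin n) (Fin n) ℝ) + α⁻¹ • K
          = α⁻¹ • (K + α • (1 : Matrix (Fin n) (Fin n) ℝ)) := by
        rw [smul_add, smul_smul, inv_mul_cancel₀ hα0, one_smul, add_comm]
      rw [this, Matrix.det_smul, Fintype.card_fin, hβ]
    have hcc : C.card + Cᶜ.card = n := by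
      rw [Finset.card_add_card_compl, Fintype.card_fin]
    have hprod : (∏ k ∈ Cᶜ, α) = α ^ Cᶜ.card := Finset.prod_const α
    rw [hw1, hw2, hprod]
    by_cases h : i ∈ C ∧ j ∈ C
    · rw [dif_pos h, dif_pos h]
      rw [Matrix.inv_def, Matrix.smul_apply, Ring.inverse_eq_inv, smul_eq_mul]
      have hpow : α⁻¹ ^ n = α⁻¹ ^ C.card * α⁻¹ ^ Cᶜ.card := by
        rw [← pow_add, hcc]
      rw [hpow]
      have hαc : α⁻¹ ^ C.card ≠ 0 := pow_ne_zero _ (inv_ne_zero hα0)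
      have hαcc : (α : ℝ) ^ Cᶜ.card ≠ 0 := pow_ne_zero _ hα0
      have hαicc : (α⁻¹ : ℝ) ^ Cᶜ.card ≠ 0 := pow_ne_zero _ (inv_ne_zero hα0)
      field_simp
      rw [mul_right_comm, ← mul_pow, one_div_mul_cancel hα0, one_pow, one_mul]
    · rw [dif_neg h, dif_neg h]
      simp
  -- assemble
  have hsum : ∀ C : Finset (Fin n),
      ((principalSub (α⁻¹ • K) C).det / (1 + α⁻¹ • K).det) *
          (kx ⬝ᵥ (sampMatrix C * (principalSub K C)⁻¹ * (sampMatrix C)ᵀ).mulVec y)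
        = kx ⬝ᵥ ((((principalSub (α⁻¹ • K) C).det / (1 + α⁻¹ • K).det) •
            (sampMatrix C * (principalSub K C)⁻¹ * (sampMatrix C)ᵀ)).mulVec y) := by
    intro C
    rw [Matrix.smul_mulVec, dotProduct_smul, smul_eq_mul]
  simp_rw [hsum]
  have hfin : (∑ C : Finset (Fin n),
      ((principalSub (α⁻¹ • K) C).det / (1 + α⁻¹ • K).det) •
        (sampMatrix C * (principalSub K C)⁻¹ * (sampMatrix C)ᵀ))
      = (K + α • (1 : Matrix (Fin n) (Fin n) ℝ))⁻¹ := by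
    ext i j
    exact key i j
  calc ∑ C : Finset (Fin n),
        kx ⬝ᵥ ((((principalSub (α⁻¹ • K) C).det / (1 + α⁻¹ • K).det) •
            (sampMatrix C * (principalSub K C)⁻¹ * (sampMatrix C)ᵀ)).mulVec y)
      = kx ⬝ᵥ ((∑ C : Finset (Fin n),
          ((principalSub (α⁻¹ • K) C).det / (1 + α⁻¹ • K).det) •
            (sampMatrix C * (principalSub K C)⁻¹ * (sampMatrix C)ᵀ)).mulVec y) := by
        have hmv : ((∑ C : Finset (Fin n),
            ((principalSub (α⁻¹ • K) C).det / (1 + α⁻¹ • K).det) •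
              (sampMatrix C * (principalSub K C)⁻¹ * (sampMatrix C)ᵀ)) *ᵥ y)
            = ∑ C : Finset (Fin n),
              ((((principalSub (α⁻¹ • K) C).det / (1 + α⁻¹ • K).det) •
                (sampMatrix C * (principalSub K C)⁻¹ * (sampMatrix C)ᵀ)) *ᵥ y) := by
          funext i
          simp only [Matrix.mulVec, dotProduct, Matrix.sum_apply, Finset.sum_apply,
            Finset.sum_mul]
          exact Finset.sum_comm
        rw [hmv, dotProduct]
        simp only [Finset.sum_apply, Finset.mul_sum]
        rw [Finset.sum_comm]
        apply Finset.sum_congr rfl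
        intro C _
        rw [dotProduct]
    _ = kx ⬝ᵥ (K + α • (1 : Matrix (Fin n) (Fin n) ℝ))⁻¹.mulVec y := by rw [hfin]
end

section
/- Let K be an n×n real symmetric positive definite matrix with spectral decomposition K = ∑_{ℓ=1}^{n} λ_ℓ v_ℓ v_ℓᵀ, where {v_1,…,v_n} is an orthonormal basis of eigenvectors with eigenvalues λ_1,…,λ_n > 0, and let 1 ≤ k ≤ n. Then ∑_{C ⊆ {1,…,n}, |C| = k} (det(K_{CC})/e_k(λ)) · C K_{CC}^{-1} Cᵀ = ∑_{ℓ=1}^{n} (e_{k−1}(λ̂_ℓ)/e_k(λ)) v_ℓ v_ℓᵀ, where λ = (λ_1,…,λ_n) and λ̂_ℓ ∈ ℝ^{n−1} is λ with the entry λ_ℓ removed. -/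
open Matrix BigOperators Finset

/-- The elementary symmetric polynomial of degree `j` in the entries of `f` indexed by
the subset `s` (with `e_0 = 1`).  Taking `s = univ.erase ℓ` gives `e_j` of the vector
with the `ℓ`-th entry removed. -/
def esymmOn {n : ℕ} (s : Finset (Fin n)) (j : ℕ) (f : Fin n → ℝ) : ℝ :=
  ∑ T ∈ s.powersetCard j, ∏ i ∈ T, f i


section auxlemmas
open Polynomial
variable {m : Type*} [Fintype m] [DecidableEq m]

lemma det_updateRow_finset_sum (A : Matrix m m ℝ) (j : m) {ι : Type*} [DecidableEq ι] (s : Finset ι)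
    (f : ι → m → ℝ) :
    (A.updateRow j (∑ i ∈ s, f i)).det = ∑ i ∈ s, (A.updateRow j (f i)).det := by
  induction s using Finset.induction_on with
  | empty =>
      have h0 : (0 : m → ℝ) = (0:ℝ) • (0 : m → ℝ) := (zero_smul ℝ (0 : m → ℝ)).symm
      rw [Finset.sum_empty, Finset.sum_empty, h0, det_updateRow_smul, zero_mul]
  | insert _ _ h ih =>
      rw [Finset.sum_insert h, det_updateRow_add, ih, Finset.sum_insert h]

lemma det_add_finset (A B : Matrix m m ℝ) :
    (A + B).det = ∑ s : Finset m, (Matrix.of fun i j => if i ∈ s then B i j else A i j).det := by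
  have h := (Matrix.detRowAlternating : AlternatingMap ℝ (m → ℝ) ℝ m).toMultilinearMap.map_add_univ
    (B : m → m → ℝ) (A : m → m → ℝ)
  have hBA : (B : m → m → ℝ) + A = ((A + B : Matrix m m ℝ) : m → m → ℝ) := by
    funext i j; simp [Matrix.add_apply]; ring
  have h : (A + B).det = ∑ s : Finset m, Matrix.det (Matrix.of (s.piecewise (B : m → m → ℝ) A)) := by
    rw [← hBA]; exact h
  calc (A + B).det = ∑ s : Finset m, Matrix.det (Matrix.of (s.piecewise (B : m → m → ℝ) A)) := h
    _ = ∑ s : Finset m, (Matrix.of fun i j => if i ∈ s then B i j else A i j).det := by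
        refine Finset.sum_congr rfl fun s _ => ?_
        congr 1
        funext i j
        by_cases hi : i ∈ s <;> simp [Finset.piecewise, hi]


lemma det_add_rank_one (A : Matrix m m ℝ) (u w : m → ℝ) :
    (A + Matrix.of fun i j => u i * w j).det
      = A.det + ∑ q, u q * (A.updateRow q w).det := by
  rw [det_add_finset]
  simp only [Matrix.of_apply]
  have key : ∀ s : Finset m,
      (Matrix.of fun i j => if i ∈ s then u i * w j else A i j).det
        = (if s = ∅ then A.det else 0)
          + ∑ q, (if s = {q} then u q * (A.updateRow q w).det else 0) := by
    intro s
    rcases Nat.lt_or_ge s.card 2 with hlt | hge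
    · interval_cases h : s.card
      · -- s = ∅
        have hs : s = ∅ := Finset.card_eq_zero.mp h
        subst hs
        simp only [if_pos rfl]
        have : (Matrix.of fun i j => if i ∈ (∅ : Finset m) then u i * w j else A i j) = A := by
          ext i j; simp
        rw [this]
        have : ∀ q : m, (if (∅ : Finset m) = {q} then u q * (A.updateRow q w).det else 0) = 0 := by
          intro q
          rw [if_neg]; intro hq; exact (Finset.singleton_ne_empty q) hq.symm
        simp [this]
      · -- card 1
        obtain ⟨q₀, hq₀⟩ := Finset.card_eq_one.mp h
        subst hq₀
        have h1 : (Matrix.of fun i j => if i ∈ ({q₀} : Finset m) then u i * w j else A i j)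
            = A.updateRow q₀ ((u q₀) • w) := by
          ext i j
          by_cases hi : i = q₀
          · subst hi; simp [Matrix.updateRow_apply]
          · simp [Matrix.updateRow_apply, hi]
        rw [h1, det_updateRow_smul]
        rw [if_neg (Finset.singleton_ne_empty q₀)]
        rw [Finset.sum_eq_single q₀]
        · simp
        · intro q _ hq
          rw [if_neg]
          intro hc
          exact hq (Finset.singleton_injective hc).symm
        · intro hq; exact absurd (Finset.mem_univ q₀) hq
    · -- card ≥ 2 : zero
      obtain ⟨q, hq, q', hq', hne⟩ := Finset.one_lt_card.mp hge
      set P : Matrix m m ℝ := Matrix.of fun i j => if i ∈ s then u i * w j else A i j with hP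
      have hPq : P q = u q • w := by funext j; simp [hP, hq]
      have hPq' : P q' = u q' • w := by funext j; simp [hP, hq']
      have e1 : P = P.updateRow q (u q • w) := by rw [← hPq, Matrix.updateRow_eq_self]
      have : P.det = u q * (P.updateRow q w).det := by
        conv_lhs => rw [e1]
        rw [det_updateRow_smul]
      rw [this]
      set P1 := P.updateRow q w with hP1
      have hP1q' : P1 q' = u q' • w := by
        rw [hP1, Matrix.updateRow_ne hne.symm, hPq']
      have e2 : P1 = P1.updateRow q' (u q' • w) := by rw [← hP1q', Matrix.updateRow_eq_self]
      have : P1.det = u q' * (P1.updateRow q' w).det := by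
        conv_lhs => rw [e2]
        rw [det_updateRow_smul]
      rw [this]
      have hzero : (P1.updateRow q' w).det = 0 := by
        apply Matrix.det_zero_of_row_eq hne
        rw [Matrix.updateRow_ne hne, Matrix.updateRow_self, hP1, Matrix.updateRow_self]
      rw [hzero]
      rw [if_neg (by intro hc; subst hc; simp at hge)]
      rw [mul_zero, mul_zero, zero_add]
      refine (Finset.sum_eq_zero fun q'' _ => ?_).symm
      rw [if_neg]
      intro hc; subst hc; simp at hge
  rw [Finset.sum_congr rfl fun s _ => key s, Finset.sum_add_distrib]
  congr 1
  · rw [Finset.sum_ite_eq' Finset.univ (∅ : Finset m) (fun _ => A.det)]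
    simp
  · rw [Finset.sum_comm]
    refine Finset.sum_congr rfl fun q _ => ?_
    rw [Finset.sum_ite_eq' Finset.univ ({q} : Finset m) (fun _ => u q * (A.updateRow q w).det)]
    simp

lemma det_ite_diagonal (A : Matrix m m ℝ) (s : Finset m) (t : ℝ) :
    (Matrix.of fun i j => if i ∈ s then (t • (1 : Matrix m m ℝ)) i j else A i j).det
      = t ^ s.card * (A.submatrix ((↑) : {x // ¬ x ∈ s} → m) (↑)).det := by
  set N : Matrix m m ℝ := Matrix.of fun i j => if i ∈ s then (t • (1 : Matrix m m ℝ)) i j else A i j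
  rw [← Matrix.det_submatrix_equiv_self (Equiv.sumCompl (fun x => x ∈ s)) N]
  have hb : N.submatrix (Equiv.sumCompl (fun x => x ∈ s)) (Equiv.sumCompl (fun x => x ∈ s))
      = Matrix.fromBlocks
      (Matrix.diagonal fun _ : {x // x ∈ s} => t) 0
      (A.submatrix (↑) (↑)) (A.submatrix (↑) (↑)) := by
    ext i j
    rcases i with i | i <;> rcases j with j | j <;>
      simp only [Matrix.submatrix_apply, Equiv.sumCompl_apply_inl, Equiv.sumCompl_apply_inr,
        Matrix.fromBlocks_apply₁₁, Matrix.fromBlocks_apply₁₂, Matrix.fromBlocks_apply₂₁,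
        Matrix.fromBlocks_apply₂₂, N, Matrix.of_apply]
    · rw [if_pos i.2]
      simp only [Matrix.smul_apply, Matrix.one_apply, Matrix.diagonal, Matrix.of_apply]
      by_cases hij : i = j
      · subst hij; simp
      · rw [if_neg (fun hc => hij (Subtype.ext hc)), if_neg hij]; simp
    · rw [if_pos i.2]
      simp only [Matrix.smul_apply, Matrix.one_apply, Matrix.zero_apply]
      rw [if_neg (fun hc : (i : m) = j => j.2 (hc ▸ i.2))]; simp
    · rw [if_neg i.2]
    · rw [if_neg i.2]
  rw [hb, Matrix.det_fromBlocks_zero₁₂, Matrix.det_diagonal, Finset.prod_const]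
  congr 2
  simp [Fintype.card_coe]

lemma det_add_smul_one {n : ℕ} (M : Matrix (Fin n) (Fin n) ℝ) (t : ℝ) :
    (M + t • 1).det = ∑ j ∈ Finset.range (n+1),
      (∑ C ∈ Finset.univ.powersetCard j, (principalSub M C).det) * t ^ (n - j) := by
  rw [det_add_finset]
  have step1 : ∀ s : Finset (Fin n),
      (Matrix.of fun i j => if i ∈ s then (t • (1 : Matrix (Fin n) (Fin n) ℝ)) i j else M i j).det
        = t ^ (n - sᶜ.card) * (principalSub M sᶜ).det := by
    intro s
    rw [det_ite_diagonal]
    congr 1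
    · congr 1
      rw [Finset.card_compl, Fintype.card_fin]
      have := Finset.card_le_univ s
      simp only [Finset.card_univ, Fintype.card_fin] at this
      omega
    · set e2 : {x // x ∈ sᶜ} ≃ {x // ¬ x ∈ s} :=
        Equiv.subtypeEquivRight (fun x => by simp [Finset.mem_compl])
      rw [← Matrix.det_submatrix_equiv_self e2 (M.submatrix (↑) (↑))]
      congr 1
  rw [Finset.sum_congr rfl fun s _ => step1 s]
  have hinv : Function.Involutive (fun s : Finset (Fin n) => sᶜ) := fun s => compl_compl s
  have hre : (∑ s : Finset (Fin n), t ^ (n - sᶜ.card) * (principalSub M sᶜ).det)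
      = ∑ C : Finset (Fin n), t ^ (n - C.card) * (principalSub M C).det :=
    Fintype.sum_equiv hinv.toPerm _ _ (fun s => rfl)
  rw [hre]
  rw [← Finset.powerset_univ, Finset.sum_powerset,
    Finset.card_univ, Fintype.card_fin]
  refine Finset.sum_congr rfl fun j hj => ?_
  rw [Finset.sum_mul]
  refine Finset.sum_congr rfl fun C hC => ?_
  rw [(Finset.mem_powersetCard.mp hC).2, mul_comm]

noncomputable def esumPoly {n : ℕ} (M : Matrix (Fin n) (Fin n) ℝ) : ℝ[X] :=
  ∑ j ∈ Finset.range (n+1),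
    Polynomial.C (∑ C ∈ Finset.univ.powersetCard j, (principalSub M C).det) * X ^ (n - j)

lemma esumPoly_eval {n : ℕ} (M : Matrix (Fin n) (Fin n) ℝ) (t : ℝ) :
    (esumPoly M).eval t = (M + t • 1).det := by
  rw [det_add_smul_one, esumPoly]
  simp [eval_finset_sum]

lemma esumPoly_coeff {n : ℕ} (M : Matrix (Fin n) (Fin n) ℝ) (k : ℕ) (hk : k ≤ n) :
    (esumPoly M).coeff (n - k) = ∑ C ∈ Finset.univ.powersetCard k, (principalSub M C).det := by
  rw [esumPoly, Polynomial.finset_sum_coeff]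
  have : ∀ j ∈ Finset.range (n+1),
      (Polynomial.C (∑ C ∈ Finset.univ.powersetCard j, (principalSub M C).det) * X ^ (n - j)).coeff (n - k)
        = if j = k then (∑ C ∈ Finset.univ.powersetCard j, (principalSub M C).det) else 0 := by
    intro j hj
    rw [Polynomial.coeff_C_mul, Polynomial.coeff_X_pow]
    have hj' : j ≤ n := Nat.lt_succ_iff.mp (Finset.mem_range.mp hj)
    by_cases hjk : j = k
    · subst hjk; simp
    · rw [if_neg (by omega), if_neg hjk, mul_zero]
  rw [Finset.sum_congr rfl this, Finset.sum_ite_eq' (Finset.range (n+1)) k _,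
    if_pos (Finset.mem_range.mpr (by omega))]

lemma esum_conj {n : ℕ} (k : ℕ) (hk : k ≤ n) (V M : Matrix (Fin n) (Fin n) ℝ)
    (hVtV : Vᵀ * V = 1) (hVVt : V * Vᵀ = 1) :
    ∑ C ∈ Finset.univ.powersetCard k, (principalSub (Vᵀ * M * V) C).det
      = ∑ C ∈ Finset.univ.powersetCard k, (principalSub M C).det := by
  have heq : esumPoly (Vᵀ * M * V) = esumPoly M := by
    apply Polynomial.funext
    intro t
    rw [esumPoly_eval, esumPoly_eval]
    have hconj : Vᵀ * M * V + t • 1 = Vᵀ * (M + t • 1) * V := by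
      rw [Matrix.mul_add, Matrix.add_mul]
      congr 1
      rw [Matrix.mul_smul, Matrix.smul_mul, Matrix.mul_one, hVtV]
    rw [hconj, Matrix.det_mul, Matrix.det_mul]
    have : Vᵀ.det * V.det = 1 := by
      rw [← Matrix.det_mul, hVtV, Matrix.det_one]
    calc Vᵀ.det * (M + t • 1).det * V.det
        = (Vᵀ.det * V.det) * (M + t • 1).det := by ring
      _ = (M + t • 1).det := by rw [this, one_mul]
  rw [← esumPoly_coeff _ k hk, ← esumPoly_coeff _ k hk, heq]

lemma powersetCard_split {n : ℕ} (a : Fin n) (k : ℕ) (hk1 : 1 ≤ k) (g : Fin n → ℝ) :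
    ∑ C ∈ Finset.univ.powersetCard k, ∏ i ∈ C, g i
      = (∑ C ∈ (Finset.univ.erase a).powersetCard k, ∏ i ∈ C, g i)
        + ∑ T ∈ (Finset.univ.erase a).powersetCard (k-1), g a * ∏ i ∈ T, g i := by
  have ha : a ∉ Finset.univ.erase a := Finset.notMem_erase a _
  have hu : (Finset.univ : Finset (Fin n)) = insert a (Finset.univ.erase a) :=
    (Finset.insert_erase (Finset.mem_univ a)).symm
  obtain ⟨k', rfl⟩ : ∃ k', k = k' + 1 := ⟨k-1, by omega⟩
  simp only [Nat.add_sub_cancel]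
  conv_lhs => rw [hu, Finset.powersetCard_succ_insert ha]
  rw [Finset.sum_union]
  · congr 1
    rw [Finset.sum_image]
    · refine Finset.sum_congr rfl fun T hT => ?_
      have haT : a ∉ T := by
        intro hc
        exact ha (Finset.mem_of_subset (Finset.mem_powersetCard.mp hT).1 hc)
      rw [Finset.prod_insert haT]
    · intro T hT T' hT' hTT'
      have haT : a ∉ T := fun hc =>
        ha (Finset.mem_of_subset (Finset.mem_powersetCard.mp hT).1 hc)
      have haT' : a ∉ T' := fun hc =>
        ha (Finset.mem_of_subset (Finset.mem_powersetCard.mp hT').1 hc)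
      have := congrArg (fun s => Finset.erase s a) hTT'
      simpa [Finset.erase_insert haT, Finset.erase_insert haT'] using this
  · rw [Finset.disjoint_left]
    intro C hC hC'
    have haC : a ∉ C := fun hc =>
      ha (Finset.mem_of_subset (Finset.mem_powersetCard.mp hC).1 hc)
    obtain ⟨T, hT, rfl⟩ := Finset.mem_image.mp hC'
    exact haC (Finset.mem_insert_self a T)

-- determinant of principal submatrix of a diagonal matrix

lemma det_principalSub_diagonal {n : ℕ} (d : Fin n → ℝ) (C : Finset (Fin n)) :
    (principalSub (Matrix.diagonal d) C).det = ∏ i ∈ C, d i := by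
  have : principalSub (Matrix.diagonal d) C
      = Matrix.diagonal (fun p : {x // x ∈ C} => d p) := by
    ext p q
    by_cases hpq : p = q
    · subst hpq; simp [principalSub, Matrix.diagonal]
    · rw [principalSub]
      have : (p : Fin n) ≠ (q : Fin n) := fun hc => hpq (Subtype.ext hc)
      simp [Matrix.diagonal_apply_ne _ this, Matrix.diagonal_apply_ne _ hpq]
  rw [this, Matrix.det_diagonal]
  exact Finset.prod_coe_sort C d

-- case a = b

lemma esum_diag_single {n : ℕ} (lam : Fin n → ℝ) (a : Fin n) (k : ℕ) (hk1 : 1 ≤ k) (t : ℝ) :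
    ∑ C ∈ Finset.univ.powersetCard k,
        (principalSub (Matrix.diagonal lam + t • Matrix.single a a 1) C).det
      = esymmOn Finset.univ k lam + t * esymmOn (Finset.univ.erase a) (k-1) lam := by
  have hmat : Matrix.diagonal lam + t • Matrix.single a a 1
      = Matrix.diagonal (fun i => lam i + if i = a then t else 0) := by
    ext i j
    by_cases hij : i = j
    · subst hij
      by_cases hia : i = a
      · subst hia; simp [Matrix.single, Matrix.diagonal]
      · simp [Matrix.single, Matrix.diagonal, hia, (show ¬ a = i from fun h => hia h.symm)]
    · have h1 : ¬ (a = i ∧ a = j) := fun ⟨h1, h2⟩ => hij (h1 ▸ h2)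
      simp [Matrix.single, Matrix.diagonal_apply_ne _ hij, h1]
  rw [hmat]
  rw [Finset.sum_congr rfl fun C _ => det_principalSub_diagonal _ C]
  rw [powersetCard_split a k hk1]
  have e1 : ∀ C ∈ (Finset.univ.erase a).powersetCard k,
      (∏ i ∈ C, (lam i + if i = a then t else 0)) = ∏ i ∈ C, lam i := by
    intro C hC
    refine Finset.prod_congr rfl fun i hi => ?_
    have : i ≠ a := by
      intro hc; subst hc
      exact (Finset.notMem_erase i _) (Finset.mem_of_subset (Finset.mem_powersetCard.mp hC).1 hi)
    rw [if_neg this, add_zero]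
  have e2 : ∀ T ∈ (Finset.univ.erase a).powersetCard (k-1),
      ((lam a + if a = a then t else 0) * ∏ i ∈ T, (lam i + if i = a then t else 0))
        = (lam a + t) * ∏ i ∈ T, lam i := by
    intro T hT
    rw [if_pos rfl]
    congr 1
    refine Finset.prod_congr rfl fun i hi => ?_
    have : i ≠ a := by
      intro hc; subst hc
      exact (Finset.notMem_erase i _) (Finset.mem_of_subset (Finset.mem_powersetCard.mp hT).1 hi)
    rw [if_neg this, add_zero]
  rw [Finset.sum_congr rfl e1, Finset.sum_congr rfl e2]
  have target : esymmOn Finset.univ k lam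
      = (∑ C ∈ (Finset.univ.erase a).powersetCard k, ∏ i ∈ C, lam i)
        + ∑ T ∈ (Finset.univ.erase a).powersetCard (k-1), lam a * ∏ i ∈ T, lam i := by
    rw [esymmOn, powersetCard_split a k hk1]
  rw [target, esymmOn]
  rw [Finset.sum_congr rfl (fun T _ => by ring :
    ∀ T ∈ (Finset.univ.erase a).powersetCard (k-1),
      (lam a + t) * ∏ i ∈ T, lam i = lam a * ∏ i ∈ T, lam i + t * ∏ i ∈ T, lam i)]
  rw [Finset.sum_add_distrib, Finset.mul_sum]
  ring

lemma esum_offdiag {n : ℕ} (lam : Fin n → ℝ) (a b : Fin n) (hab : a ≠ b) (k : ℕ) (t : ℝ) :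
    ∑ C ∈ Finset.univ.powersetCard k,
        (principalSub (Matrix.diagonal lam + t • Matrix.single b a 1) C).det
      = esymmOn Finset.univ k lam := by
  rw [esymmOn]
  refine Finset.sum_congr rfl fun C _ => ?_
  set M' := principalSub (Matrix.diagonal lam + t • Matrix.single b a 1) C with hM'
  have hentry : ∀ p q : {x // x ∈ C}, M' p q
      = (if (p : Fin n) = q then lam p else 0) + t * (if b = (p : Fin n) ∧ a = (q : Fin n) then 1 else 0) := by
    intro p q
    simp [hM', principalSub, Matrix.add_apply, Matrix.diagonal, Matrix.single]
  have hdiag : ∀ p : {x // x ∈ C}, M' p p = lam p := by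
    intro p
    rw [hentry p p, if_pos rfl]
    have : ¬ (b = (p : Fin n) ∧ a = (p : Fin n)) := fun ⟨h1, h2⟩ => hab (h2.trans h1.symm)
    rw [if_neg this]; ring
  have hoff : ∀ p q : {x // x ∈ C}, (p : Fin n) ≠ q → ¬((b:Fin n) = p ∧ (a:Fin n) = q) → M' p q = 0 := by
    intro p q hpq hba
    rw [hentry p q, if_neg hpq, if_neg hba]; ring
  have hprod : ∏ p : {x // x ∈ C}, M' p p = ∏ i ∈ C, lam i := by
    rw [Finset.prod_congr rfl fun p _ => hdiag p]
    exact Finset.prod_coe_sort C lam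
  rcases lt_or_gt_of_ne hab with hlt | hgt
  · -- a < b : nonzero entry (p=b, q=a) has p > q : lower triangular
    rw [← hprod]
    apply Matrix.det_of_lowerTriangular
    intro p q h
    -- h : toDual q < toDual p i.e. p < q
    have hpq : p < q := h
    have hpq' : (p : Fin n) < (q : Fin n) := Subtype.coe_lt_coe.mpr hpq
    exact hoff p q (ne_of_lt hpq')
      (fun ⟨h1, h2⟩ => absurd (h1 ▸ h2 ▸ hpq') (by simp [hlt]; omega))
  · rw [← hprod]
    apply Matrix.det_of_upperTriangular
    intro p q h
    have hpq : q < p := h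
    have hpq' : (q : Fin n) < (p : Fin n) := Subtype.coe_lt_coe.mpr hpq
    exact hoff p q (ne_of_gt hpq')
      (fun ⟨h1, h2⟩ => absurd (h1 ▸ h2 ▸ hpq') (by simp [hgt]; omega))

lemma esum_rank_one {n : ℕ} (K : Matrix (Fin n) (Fin n) ℝ) (vb va : Fin n → ℝ) (k : ℕ) (t : ℝ) :
    ∑ C ∈ Finset.univ.powersetCard k, (principalSub (K + t • Matrix.vecMulVec vb va) C).det
      = (∑ C ∈ Finset.univ.powersetCard k, (principalSub K C).det)
        + t * ∑ C ∈ Finset.univ.powersetCard k, ∑ q : {x // x ∈ C},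
            vb q * ((principalSub K C).updateRow q (fun p => va p)).det := by
  have step : ∀ C : Finset (Fin n),
      (principalSub (K + t • Matrix.vecMulVec vb va) C).det
        = (principalSub K C).det
          + t * ∑ q : {x // x ∈ C}, vb q * ((principalSub K C).updateRow q (fun p => va p)).det := by
    intro C
    have hm : principalSub (K + t • Matrix.vecMulVec vb va) C
        = principalSub K C + Matrix.of (fun p q : {x // x ∈ C} => (t * vb p) * va q) := by
      ext p q
      simp [principalSub, Matrix.add_apply, Matrix.vecMulVec_apply]
      ring
    rw [hm, det_add_rank_one]
    congr 1
    rw [Finset.mul_sum]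
    refine Finset.sum_congr rfl fun q _ => ?_
    ring
  rw [Finset.sum_congr rfl fun C _ => step C, Finset.sum_add_distrib, Finset.mul_sum]

lemma posDef_principalSub {n : ℕ} (K : Matrix (Fin n) (Fin n) ℝ) (hPD : K.PosDef)
    (C : Finset (Fin n)) : (principalSub K C).PosDef := by
  rw [Matrix.posDef_iff_dotProduct_mulVec]
  constructor
  · -- Hermitian
    have h := hPD.1
    ext p q
    have h1 : K (q : Fin n) p = K (p : Fin n) q := by
      have := congrFun (congrFun h (p : Fin n)) (q : Fin n)
      simpa [Matrix.conjTranspose_apply] using this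
    simpa [Matrix.conjTranspose_apply, principalSub] using h1
  · intro x hx
    set y : Fin n → ℝ := fun i => if h : i ∈ C then x ⟨i, h⟩ else 0 with hy
    have hyv : ∀ p : {x // x ∈ C}, y (p : Fin n) = x p := by
      intro p; rw [hy]; simp
    have hyne : y ≠ 0 := by
      obtain ⟨q, hq⟩ := Function.ne_iff.mp hx
      intro hc
      apply hq
      have := congrFun hc (q : Fin n)
      rwa [hyv q] at this
    have haux : ∀ f : Fin n → ℝ, ∑ i, f i * y i = ∑ p : {x // x ∈ C}, f p * x p := by
      intro f
      rw [← Finset.sum_subset (Finset.subset_univ C)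
        (fun i _ hi => by rw [hy]; simp [hi])]
      rw [← Finset.sum_coe_sort C (fun i => f i * y i)]
      exact Finset.sum_congr rfl fun p _ => by rw [hyv p]
    have key : dotProduct (star x) ((principalSub K C) *ᵥ x)
        = dotProduct (star y) (K *ᵥ y) := by
      have hsx : star x = x := by funext i; exact star_trivial _
      have hsy : star y = y := by funext i; exact star_trivial _
      rw [hsx, hsy]
      have hin : ∀ p : {x // x ∈ C}, ((principalSub K C) *ᵥ x) p = (K *ᵥ y) (p : Fin n) := by
        intro p
        rw [Matrix.mulVec, Matrix.mulVec]
        have := haux (fun j => K (p : Fin n) j)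
        simpa [dotProduct, principalSub] using this.symm
      calc dotProduct x ((principalSub K C) *ᵥ x)
          = ∑ p : {x // x ∈ C}, ((principalSub K C) *ᵥ x) p * x p := by
            rw [dotProduct]; exact Finset.sum_congr rfl fun p _ => mul_comm _ _
        _ = ∑ p : {x // x ∈ C}, (K *ᵥ y) (p : Fin n) * x p :=
            Finset.sum_congr rfl fun p _ => by rw [hin p]
        _ = ∑ i, (K *ᵥ y) i * y i := (haux (fun i => (K *ᵥ y) i)).symm
        _ = dotProduct y (K *ᵥ y) := by
            rw [dotProduct]; exact Finset.sum_congr rfl fun i _ => mul_comm _ _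
    rw [key]
    exact hPD.dotProduct_mulVec_pos hyne

lemma det_smul_inv_eq_adjugate {m : Type*} [Fintype m] [DecidableEq m]
    (A : Matrix m m ℝ) (h : A.det ≠ 0) : A.det • A⁻¹ = A.adjugate := by
  rw [Matrix.inv_def, Ring.inverse_eq_inv', smul_smul, mul_inv_cancel₀ h, one_smul]

end auxlemmas

/-- Spectral expression for the kDPP expectation:
`E_{C ~ kDPP(K)}[C K_{CC}⁻¹ Cᵀ] = ∑ ℓ, (e_{k−1}(λ̂_ℓ)/e_k(λ)) v_ℓ v_ℓᵀ`. -/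
theorem kdpp_expectation_spectral (n : ℕ) (K : Matrix (Fin n) (Fin n) ℝ)
    (hsymm : K.IsSymm) (hPD : K.PosDef) (lam : Fin n → ℝ) (v : Fin n → Fin n → ℝ)
    (hpos : ∀ ℓ, 0 < lam ℓ)
    (hortho : ∀ i j, v i ⬝ᵥ v j = if i = j then (1 : ℝ) else 0)
    (hK : K = ∑ ℓ, lam ℓ • vecMulVec (v ℓ) (v ℓ))
    (k : ℕ) (hk1 : 1 ≤ k) (hkn : k ≤ n) :
    ∑ C ∈ Finset.univ.powersetCard k,
        ((principalSub K C).det / esymmOn Finset.univ k lam) •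
          (sampMatrix C * (principalSub K C)⁻¹ * (sampMatrix C)ᵀ) =
      ∑ ℓ, (esymmOn (Finset.univ.erase ℓ) (k - 1) lam / esymmOn Finset.univ k lam) •
        vecMulVec (v ℓ) (v ℓ) := by
  classical
  set e : ℝ := esymmOn Finset.univ k lam with he
  have epos : 0 < e := by
    rw [he, esymmOn]
    apply Finset.sum_pos
    · intro C _
      exact Finset.prod_pos fun i _ => hpos i
    · exact Finset.powersetCard_nonempty.mpr (by simpa using hkn)
  -- the eigenvector matrix
  set V : Matrix (Fin n) (Fin n) ℝ := Matrix.of v with hV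
  have hVVt : V * Vᵀ = 1 := by
    ext i j
    have := hortho i j
    simpa [Matrix.mul_apply, dotProduct, Matrix.one_apply, hV] using this
  have hVtV : Vᵀ * V = 1 := mul_eq_one_comm.mp hVVt
  have hKdiag : K = Vᵀ * Matrix.diagonal lam * V := by
    rw [hK]
    ext i j
    rw [Matrix.sum_apply]
    rw [Matrix.mul_apply]
    have : ∀ p, (Vᵀ * Matrix.diagonal lam) i p = v p i * lam p := by
      intro p
      rw [Matrix.mul_diagonal, Matrix.transpose_apply]
      rfl
    refine Finset.sum_congr rfl fun p _ => ?_
    rw [this p]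
    simp [Matrix.smul_apply, Matrix.vecMulVec_apply, hV]
    ring
  -- positive definiteness of the principal submatrices
  have hdetpos : ∀ C : Finset (Fin n), 0 < (principalSub K C).det :=
    fun C => (posDef_principalSub K hPD C).det_pos
  have hadj : ∀ C : Finset (Fin n),
      (principalSub K C).det • (principalSub K C)⁻¹ = (principalSub K C).adjugate :=
    fun C => det_smul_inv_eq_adjugate _ (hdetpos C).ne'
  -- main numerator identity
  have hmain : ∑ C ∈ Finset.univ.powersetCard k,
      sampMatrix C * (principalSub K C).adjugate * (sampMatrix C)ᵀ
      = ∑ ℓ, esymmOn (Finset.univ.erase ℓ) (k - 1) lam • vecMulVec (v ℓ) (v ℓ) := by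
    have hesumK : ∑ C ∈ Finset.univ.powersetCard k, (principalSub K C).det = e := by
      rw [hKdiag, esum_conj k hkn V (Matrix.diagonal lam) hVtV hVVt,
        Finset.sum_congr rfl fun C _ => det_principalSub_diagonal lam C, he, esymmOn]
    have cancel : ∀ X Y : Matrix (Fin n) (Fin n) ℝ, V * X * Vᵀ = V * Y * Vᵀ → X = Y := by
      intro X Y h
      calc X = 1 * X * 1 := by rw [Matrix.one_mul, Matrix.mul_one]
        _ = (Vᵀ * V) * X * (Vᵀ * V) := by rw [hVtV]
        _ = Vᵀ * (V * X * Vᵀ) * V := by simp only [Matrix.mul_assoc]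
        _ = Vᵀ * (V * Y * Vᵀ) * V := by rw [h]
        _ = (Vᵀ * V) * Y * (Vᵀ * V) := by simp only [Matrix.mul_assoc]
        _ = Y := by rw [hVtV, Matrix.one_mul, Matrix.mul_one]
    apply cancel
    ext a b
    -- the W matrices
    have hW : ∀ C : Finset (Fin n), V * sampMatrix C
        = Matrix.of (fun ℓ (q : {x // x ∈ C}) => v ℓ (q : Fin n)) := by
      intro C
      ext ℓ q
      rw [Matrix.mul_apply]
      simp only [sampMatrix, hV, Matrix.of_apply, mul_ite, mul_one, mul_zero]
      rw [Finset.sum_ite_eq' Finset.univ ((q : Fin n)) (fun i => v ℓ i)]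
      simp
    -- left entry
    have hst : ∀ C : Finset (Fin n),
        V * (sampMatrix C * (principalSub K C).adjugate * (sampMatrix C)ᵀ) * Vᵀ
          = Matrix.of (fun ℓ (q : {x // x ∈ C}) => v ℓ (q : Fin n))
            * (principalSub K C).adjugate
            * (Matrix.of (fun ℓ (q : {x // x ∈ C}) => v ℓ (q : Fin n)))ᵀ := by
      intro C
      rw [← hW C, Matrix.transpose_mul]
      simp only [Matrix.mul_assoc]
    have hinner : ∀ (C : Finset (Fin n)) (q : {x // x ∈ C}),
        (∑ p : {x // x ∈ C}, v a (p : Fin n) * (principalSub K C).adjugate p q)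
          = ((principalSub K C).updateRow q (fun p : {x // x ∈ C} => v a (p : Fin n))).det := by
      intro C q
      calc ∑ p : {x // x ∈ C}, v a (p : Fin n) * (principalSub K C).adjugate p q
          = ∑ p : {x // x ∈ C},
              ((principalSub K C).updateRow q
                ((v a (p : Fin n)) • (Pi.single p (1:ℝ) : {x // x ∈ C} → ℝ))).det := by
            refine Finset.sum_congr rfl fun p _ => ?_
            rw [Matrix.adjugate_apply, Matrix.det_updateRow_smul]
        _ = ((principalSub K C).updateRow q
              (∑ p : {x // x ∈ C}, (v a (p : Fin n)) • (Pi.single p (1:ℝ) : {x // x ∈ C} → ℝ))).det :=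
            (det_updateRow_finset_sum _ q Finset.univ _).symm
        _ = ((principalSub K C).updateRow q (fun p : {x // x ∈ C} => v a (p : Fin n))).det := by
            have hrow : (∑ p : {x // x ∈ C}, (v a (p : Fin n)) • (Pi.single p (1:ℝ) : {x // x ∈ C} → ℝ))
                = fun p : {x // x ∈ C} => v a (p : Fin n) := by
              funext r
              rw [Finset.sum_apply]
              simp only [Pi.smul_apply, Pi.single_apply, smul_eq_mul, mul_ite, mul_one, mul_zero]
              rw [Finset.sum_ite_eq Finset.univ r (fun p => v a (p : Fin n))]
              simp
            rw [hrow]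
    have hleft : (V * (∑ C ∈ Finset.univ.powersetCard k,
          sampMatrix C * (principalSub K C).adjugate * (sampMatrix C)ᵀ) * Vᵀ) a b
        = ∑ C ∈ Finset.univ.powersetCard k, ∑ q : {x // x ∈ C},
            v b (q : Fin n) * ((principalSub K C).updateRow q
              (fun p : {x // x ∈ C} => v a (p : Fin n))).det := by
      rw [Finset.mul_sum, Finset.sum_mul, Matrix.sum_apply]
      refine Finset.sum_congr rfl fun C _ => ?_
      rw [hst C, Matrix.mul_apply]
      refine Finset.sum_congr rfl fun q _ => ?_
      rw [Matrix.mul_apply, Matrix.transpose_apply]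
      rw [Finset.sum_congr rfl fun p (_ : p ∈ Finset.univ) => by rw [Matrix.of_apply]]
      rw [hinner C q, Matrix.of_apply]
      ring
    -- right entry
    have hXentry : ∀ ℓ, (V * vecMulVec (v ℓ) (v ℓ) * Vᵀ) a b
        = (if a = ℓ then (1:ℝ) else 0) * (if ℓ = b then (1:ℝ) else 0) := by
      intro ℓ
      have h1 : ∀ j, (V * vecMulVec (v ℓ) (v ℓ)) a j = (if a = ℓ then (1:ℝ) else 0) * v ℓ j := by
        intro j
        rw [Matrix.mul_apply]
        have h2 : ∑ p, V a p * vecMulVec (v ℓ) (v ℓ) p j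
            = (∑ p, v a p * v ℓ p) * v ℓ j := by
          rw [Finset.sum_mul]
          refine Finset.sum_congr rfl fun p _ => ?_
          simp only [Matrix.vecMulVec_apply, hV, Matrix.of_apply]
          ring
        rw [h2]
        have h3 := hortho a ℓ
        rw [dotProduct] at h3
        rw [h3]
      rw [Matrix.mul_apply]
      calc ∑ j, (V * vecMulVec (v ℓ) (v ℓ)) a j * Vᵀ j b
          = (if a = ℓ then (1:ℝ) else 0) * ∑ j, v ℓ j * v b j := by
            rw [Finset.mul_sum]
            refine Finset.sum_congr rfl fun j _ => ?_
            rw [h1 j, Matrix.transpose_apply]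
            simp only [hV, Matrix.of_apply]
            ring
        _ = (if a = ℓ then (1:ℝ) else 0) * (if ℓ = b then (1:ℝ) else 0) := by
            have h3 := hortho ℓ b
            rw [dotProduct] at h3
            rw [h3]
    have hright : (V * (∑ ℓ, esymmOn (Finset.univ.erase ℓ) (k - 1) lam • vecMulVec (v ℓ) (v ℓ)) * Vᵀ) a b
        = if a = b then esymmOn (Finset.univ.erase a) (k - 1) lam else 0 := by
      rw [Finset.mul_sum, Finset.sum_mul, Matrix.sum_apply]
      have hterm : ∀ ℓ, (V * (esymmOn (Finset.univ.erase ℓ) (k - 1) lam • vecMulVec (v ℓ) (v ℓ)) * Vᵀ) a b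
          = esymmOn (Finset.univ.erase ℓ) (k - 1) lam
            * ((if a = ℓ then (1:ℝ) else 0) * (if ℓ = b then (1:ℝ) else 0)) := by
        intro ℓ
        rw [Matrix.mul_smul, Matrix.smul_mul, Matrix.smul_apply, hXentry ℓ, smul_eq_mul]
      rw [Finset.sum_congr rfl fun ℓ _ => hterm ℓ]
      rw [Finset.sum_eq_single a]
      · by_cases hab : a = b
        · rw [if_pos rfl, if_pos hab, hab, if_pos rfl]; ring
        · rw [if_pos rfl, if_neg hab, if_neg hab]; ring
      · intro ℓ _ hne
        rw [if_neg (fun hc => hne hc.symm)]; ring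
      · intro h; exact absurd (Finset.mem_univ a) h
    rw [hleft, hright]
    -- the rank-one / conjugation argument
    have hE2 : K + (1:ℝ) • vecMulVec (v b) (v a)
        = Vᵀ * (Matrix.diagonal lam + (1:ℝ) • Matrix.single b a 1) * V := by
      rw [Matrix.mul_add, Matrix.add_mul, ← hKdiag]
      congr 1
      rw [Matrix.mul_smul, Matrix.smul_mul]
      congr 1
      have hs1 : Vᵀ * Matrix.single b a (1:ℝ)
          = Matrix.of (fun i p => if a = p then v b i else 0) := by
        ext i p
        rw [Matrix.mul_apply]
        simp only [Matrix.single, Matrix.of_apply, Matrix.transpose_apply, hV]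
        by_cases hap : a = p
        · simp only [hap, and_true, mul_ite, mul_one, mul_zero, if_pos rfl]
          rw [Finset.sum_ite_eq Finset.univ b (fun q => v q i)]
          simp
        · simp [hap]
      rw [hs1]
      ext i j
      rw [Matrix.mul_apply]
      simp only [Matrix.of_apply, ite_mul, zero_mul, hV]
      rw [Finset.sum_ite_eq Finset.univ a (fun p => v b i * v p j)]
      simp [Matrix.vecMulVec_apply, hV]
    have h1 := esum_rank_one K (v b) (v a) k 1
    rw [hE2, esum_conj k hkn V _ hVtV hVVt, hesumK] at h1
    by_cases hab : a = b
    · subst hab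
      rw [esum_diag_single lam a k hk1 1] at h1
      rw [if_pos rfl]
      linarith [h1, he]
    · rw [esum_offdiag lam a b hab k 1] at h1
      rw [if_neg hab]
      rw [he] at h1
      linarith [h1]
  -- reduce the goal to hmain
  have lhs_eq : ∑ C ∈ Finset.univ.powersetCard k,
      ((principalSub K C).det / e) • (sampMatrix C * (principalSub K C)⁻¹ * (sampMatrix C)ᵀ)
      = e⁻¹ • ∑ C ∈ Finset.univ.powersetCard k,
          sampMatrix C * (principalSub K C).adjugate * (sampMatrix C)ᵀ := by
    rw [Finset.smul_sum]
    refine Finset.sum_congr rfl fun C _ => ?_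
    rw [div_eq_inv_mul, mul_smul]
    congr 1
    calc (principalSub K C).det • (sampMatrix C * (principalSub K C)⁻¹ * (sampMatrix C)ᵀ)
        = sampMatrix C * ((principalSub K C).det • (principalSub K C)⁻¹) * (sampMatrix C)ᵀ := by
          rw [Matrix.mul_smul, Matrix.smul_mul]
      _ = sampMatrix C * (principalSub K C).adjugate * (sampMatrix C)ᵀ := by rw [hadj C]
  have rhs_eq : ∑ ℓ, (esymmOn (Finset.univ.erase ℓ) (k - 1) lam / e) • vecMulVec (v ℓ) (v ℓ)
      = e⁻¹ • ∑ ℓ, esymmOn (Finset.univ.erase ℓ) (k - 1) lam • vecMulVec (v ℓ) (v ℓ) := by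
    rw [Finset.smul_sum]
    refine Finset.sum_congr rfl fun ℓ _ => ?_
    rw [div_eq_inv_mul, mul_smul]
  rw [lhs_eq, rhs_eq, hmain]
end

section
/- Let σ_1 ≥ σ_2 ≥ … ≥ σ_n ≥ 0 be real numbers and let k and l be integers with k ≥ l > 0 and k + 1 ≤ n, and assume e_k(σ) > 0. Then e_{k+1}(σ)/e_k(σ) ≤ (1/(k − l + 1)) ∑_{i=l+1}^{n} σ_i, where e_j(σ) denotes the elementary symmetric polynomial of degree j in σ_1,…,σ_n. -/
open Matrix BigOperators Finset

/-- Guruswami–Sinop inequality: for `σ_1 ≥ … ≥ σ_n ≥ 0` and integers `k ≥ l > 0`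
with `k + 1 ≤ n` and `e_k(σ) > 0`,
`e_{k+1}(σ)/e_k(σ) ≤ (1/(k − l + 1)) ∑_{i=l+1}^{n} σ_i`.
(Indices of `σ` are 0-based in the formalization, so `∑_{i=l+1}^{n} σ_i` becomes the
sum over indices `i` with `l ≤ i`.) -/
theorem guruswami_sinop (n : ℕ) (σ : Fin n → ℝ)
    (hsort : ∀ i j : Fin n, i ≤ j → σ j ≤ σ i) (hnonneg : ∀ i, 0 ≤ σ i)
    (k l : ℕ) (hl : 0 < l) (hlk : l ≤ k) (hkn : k + 1 ≤ n)
    (he : 0 < esymmOn Finset.univ k σ) :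
    esymmOn Finset.univ (k + 1) σ / esymmOn Finset.univ k σ ≤
      (1 / ((k : ℝ) - l + 1)) *
        ∑ i ∈ Finset.univ.filter (fun i : Fin n => l ≤ (i : ℕ)), σ i := by
  have hlR : (l:ℝ) ≤ k := by exact_mod_cast hlk
  have hc0 : (0:ℝ) < (k:ℝ) - l + 1 := by linarith
  have hc : (k:ℝ) - l + 1 = ((k + 1 - l : ℕ) : ℝ) := by
    have h1 : l ≤ k + 1 := le_trans hlk (Nat.le_succ k)
    push_cast [Nat.cast_sub h1]
    ring
  set S := ∑ i ∈ Finset.univ.filter (fun i : Fin n => l ≤ (i : ℕ)), σ i with hS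
  -- Key inequality: (k+1-l) * e_{k+1} ≤ S * e_k
  have key : ((k + 1 - l : ℕ) : ℝ) * esymmOn Finset.univ (k+1) σ ≤
      S * esymmOn Finset.univ k σ := by
    have step1 : ((k + 1 - l : ℕ) : ℝ) * esymmOn Finset.univ (k+1) σ ≤
        ∑ T ∈ (Finset.univ : Finset (Fin n)).powersetCard (k+1),
          ∑ i ∈ T.filter (fun i : Fin n => l ≤ (i:ℕ)), ∏ j ∈ T, σ j := by
      rw [esymmOn, Finset.mul_sum]
      apply Finset.sum_le_sum
      intro T hT
      have hTcard : T.card = k + 1 := (Finset.mem_powersetCard.mp hT).2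
      have hfle : (T.filter (fun i : Fin n => ¬ l ≤ (i:ℕ))).card ≤ l := by
        have : (T.filter (fun i : Fin n => ¬ l ≤ (i:ℕ))).card ≤ (Finset.range l).card := by
          apply Finset.card_le_card_of_injOn (fun i : Fin n => (i:ℕ))
          · intro i hi
            simp only [Finset.mem_coe, Finset.mem_filter, not_le] at hi
            simpa using hi.2
          · intro a _ b _ h
            exact Fin.val_injective h
        simpa using this
      have hcard : k + 1 - l ≤ (T.filter (fun i : Fin n => l ≤ (i:ℕ))).card := by
        have := Finset.card_filter_add_card_filter_not
          (s := T) (p := fun i : Fin n => l ≤ (i:ℕ)) 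
        omega
      have hcardR : ((k + 1 - l : ℕ) : ℝ) ≤ ((T.filter (fun i : Fin n => l ≤ (i:ℕ))).card : ℝ) := by
        exact_mod_cast hcard
      calc ((k + 1 - l : ℕ) : ℝ) * ∏ j ∈ T, σ j
          ≤ ((T.filter (fun i : Fin n => l ≤ (i:ℕ))).card : ℝ) * ∏ j ∈ T, σ j := by
            apply mul_le_mul_of_nonneg_right hcardR
            exact Finset.prod_nonneg (fun j _ => hnonneg j)
        _ = ∑ i ∈ T.filter (fun i : Fin n => l ≤ (i:ℕ)), ∏ j ∈ T, σ j := by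
            rw [Finset.sum_const, nsmul_eq_mul]
    have step2 : ∑ T ∈ (Finset.univ : Finset (Fin n)).powersetCard (k+1),
          ∑ i ∈ T.filter (fun i : Fin n => l ≤ (i:ℕ)), ∏ j ∈ T, σ j
        = ∑ i ∈ Finset.univ.filter (fun i : Fin n => l ≤ (i:ℕ)),
            ∑ T ∈ ((Finset.univ : Finset (Fin n)).powersetCard (k+1)).filter (fun T => i ∈ T),
              ∏ j ∈ T, σ j := by
      apply Finset.sum_comm'
      intro T i
      simp only [Finset.mem_filter, Finset.mem_univ, true_and]
      tauto
    have step3 : ∀ i : Fin n,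
        ∑ T ∈ ((Finset.univ : Finset (Fin n)).powersetCard (k+1)).filter (fun T => i ∈ T),
            ∏ j ∈ T, σ j
        = σ i * ∑ Q ∈ ((Finset.univ : Finset (Fin n)).erase i).powersetCard k, ∏ j ∈ Q, σ j := by
      intro i
      rw [Finset.mul_sum]
      apply Finset.sum_nbij' (i := fun T => T.erase i) (j := fun Q => insert i Q)
      · intro T hT
        simp only [Finset.mem_filter, Finset.mem_powersetCard] at hT ⊢
        obtain ⟨⟨_, hTc⟩, hiT⟩ := hT
        refine ⟨?_, ?_⟩
        · intro x hx
          simp only [Finset.mem_erase] at hx ⊢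
          exact ⟨hx.1, Finset.mem_univ x⟩
        · rw [Finset.card_erase_of_mem hiT, hTc]; omega
      · intro Q hQ
        simp only [Finset.mem_powersetCard] at hQ
        obtain ⟨hQs, hQc⟩ := hQ
        have hiQ : i ∉ Q := fun h => by
          have := hQs h
          simp at this
        simp only [Finset.mem_filter, Finset.mem_powersetCard]
        refine ⟨⟨fun x _ => Finset.mem_univ x, ?_⟩, Finset.mem_insert_self i Q⟩
        rw [Finset.card_insert_of_notMem hiQ, hQc]
      · intro T hT
        simp only [Finset.mem_filter] at hT
        exact Finset.insert_erase hT.2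
      · intro Q hQ
        simp only [Finset.mem_powersetCard] at hQ
        have hiQ : i ∉ Q := fun h => by
          have := hQ.1 h
          simp at this
        exact Finset.erase_insert hiQ
      · intro T hT
        simp only [Finset.mem_filter] at hT
        exact (Finset.mul_prod_erase T σ hT.2).symm
    have step4 : ∑ i ∈ Finset.univ.filter (fun i : Fin n => l ≤ (i:ℕ)),
          σ i * ∑ Q ∈ ((Finset.univ : Finset (Fin n)).erase i).powersetCard k, ∏ j ∈ Q, σ j
        ≤ S * esymmOn Finset.univ k σ := by
      rw [hS, Finset.sum_mul]
      apply Finset.sum_le_sum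
      intro i _
      apply mul_le_mul_of_nonneg_left _ (hnonneg i)
      rw [esymmOn]
      apply Finset.sum_le_sum_of_subset_of_nonneg
      · exact Finset.powersetCard_mono (Finset.erase_subset i Finset.univ)
      · intro Q _ _
        exact Finset.prod_nonneg (fun j _ => hnonneg j)
    calc ((k + 1 - l : ℕ) : ℝ) * esymmOn Finset.univ (k+1) σ
        ≤ ∑ T ∈ (Finset.univ : Finset (Fin n)).powersetCard (k+1),
            ∑ i ∈ T.filter (fun i : Fin n => l ≤ (i:ℕ)), ∏ j ∈ T, σ j := step1
      _ = ∑ i ∈ Finset.univ.filter (fun i : Fin n => l ≤ (i:ℕ)),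
            ∑ T ∈ ((Finset.univ : Finset (Fin n)).powersetCard (k+1)).filter (fun T => i ∈ T),
              ∏ j ∈ T, σ j := step2
      _ = ∑ i ∈ Finset.univ.filter (fun i : Fin n => l ≤ (i:ℕ)),
            σ i * ∑ Q ∈ ((Finset.univ : Finset (Fin n)).erase i).powersetCard k, ∏ j ∈ Q, σ j := by
            exact Finset.sum_congr rfl (fun i _ => step3 i)
      _ ≤ S * esymmOn Finset.univ k σ := step4
  rw [← hc] at key
  rw [div_le_iff₀ he]
  set c := (k:ℝ) - l + 1
  calc esymmOn Finset.univ (k+1) σ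
      = (1/c) * (c * esymmOn Finset.univ (k+1) σ) := by field_simp
    _ ≤ (1/c) * (S * esymmOn Finset.univ k σ) := by
        apply mul_le_mul_of_nonneg_left key (by positivity)
    _ = 1/c * S * esymmOn Finset.univ k σ := by ring
end

section
/- Let λ_1 ≥ λ_2 ≥ … ≥ λ_n > 0 be real numbers and let 1 ≤ k ≤ n. For each ℓ ∈ {1,…,n}, let λ̂_ℓ ∈ ℝ^{n−1} be the vector (λ_1,…,λ_n) with the entry λ_ℓ removed. Then for every ℓ, e_k(λ̂_ℓ)/e_{k−1}(λ̂_ℓ) ≤ ∑_{i=k}^{n} λ_i. -/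
open Matrix BigOperators Finset

/-- For `λ_1 ≥ … ≥ λ_n > 0` and `1 ≤ k ≤ n`, for every `ℓ`,
`e_k(λ̂_ℓ)/e_{k−1}(λ̂_ℓ) ≤ ∑_{i=k}^{n} λ_i`, where `λ̂_ℓ` is `λ` with the entry `λ_ℓ`
removed.  (Indices are 0-based in the formalization, so `∑_{i=k}^{n} λ_i` becomes the
sum over indices `i` with `k ≤ i + 1`.) -/
theorem esymm_ratio_le_tail_sum (n : ℕ) (lam : Fin n → ℝ) (hpos : ∀ i, 0 < lam i)
    (hsort : ∀ i j : Fin n, i ≤ j → lam j ≤ lam i)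
    (k : ℕ) (hk1 : 1 ≤ k) (hkn : k ≤ n) (ℓ : Fin n) :
    esymmOn (Finset.univ.erase ℓ) k lam / esymmOn (Finset.univ.erase ℓ) (k - 1) lam ≤
      ∑ i ∈ Finset.univ.filter (fun i : Fin n => k ≤ (i : ℕ) + 1), lam i := by
  classical
  have hn : 0 < n := lt_of_lt_of_le hk1 hkn
  set s : Finset (Fin n) := Finset.univ.erase ℓ with hs
  set F : Finset (Fin n) := Finset.univ.filter (fun i : Fin n => k ≤ (i : ℕ) + 1) with hF
  set P : Finset (Finset (Fin n)) := s.powersetCard (k - 1) with hP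
  set A : Finset (Finset (Fin n)) := s.powersetCard k with hA
  have hscard : s.card = n - 1 := by
    simp [hs, Finset.card_erase_of_mem]
  -- denominator is positive
  have hPne : P.Nonempty := by
    rw [hP, Finset.powersetCard_nonempty, hscard]
    omega
  have hden : 0 < esymmOn s (k - 1) lam := by
    apply Finset.sum_pos _ hPne
    intro T _
    exact Finset.prod_pos fun i _ => hpos i
  rw [div_le_iff₀ hden]
  -- the injection from k-subsets to (max, rest) pairs
  set g : Finset (Fin n) → Fin n × Finset (Fin n) :=
    fun T => if h : T.Nonempty then (T.max' h, T.erase (T.max' h)) else (⟨0, hn⟩, ∅) with hg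
  have hTne : ∀ T ∈ A, T.Nonempty := by
    intro T hT
    rw [hA, Finset.mem_powersetCard] at hT
    rw [← Finset.card_pos, hT.2]; omega
  have hgeq : ∀ T (h : T.Nonempty), g T = (T.max' h, T.erase (T.max' h)) := by
    intro T h; simp [hg, h]
  have hinj : ∀ T₁ ∈ A, ∀ T₂ ∈ A, g T₁ = g T₂ → T₁ = T₂ := by
    intro T₁ h₁ T₂ h₂ heq
    have hne₁ := hTne _ h₁
    have hne₂ := hTne _ h₂
    rw [hgeq _ hne₁, hgeq _ hne₂, Prod.mk.injEq] at heq
    calc T₁ = insert (T₁.max' hne₁) (T₁.erase (T₁.max' hne₁)) :=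
            (Finset.insert_erase (Finset.max'_mem _ _)).symm
      _ = insert (T₂.max' hne₂) (T₂.erase (T₂.max' hne₂)) := by rw [heq.2, heq.1]
      _ = T₂ := Finset.insert_erase (Finset.max'_mem _ _)
  have hmaps : ∀ T ∈ A, g T ∈ F ×ˢ P := by
    intro T hT
    have hne := hTne _ hT
    rw [hA, Finset.mem_powersetCard] at hT
    rw [hgeq _ hne, Finset.mem_product]
    constructor
    · rw [hF, Finset.mem_filter]
      refine ⟨Finset.mem_univ _, ?_⟩
      -- T ⊆ {0, ..., max}, so k = |T| ≤ max + 1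
      have hsub : T.image (Fin.val) ⊆ Finset.range ((T.max' hne : ℕ) + 1) := by
        intro x hx
        rw [Finset.mem_image] at hx
        obtain ⟨i, hi, rfl⟩ := hx
        rw [Finset.mem_range, Nat.lt_succ_iff]
        exact Finset.le_max' _ _ hi
      have := Finset.card_le_card hsub
      rwa [Finset.card_image_of_injective _ Fin.val_injective, hT.2,
        Finset.card_range] at this
    · rw [hP, Finset.mem_powersetCard]
      exact ⟨(Finset.erase_subset _ _).trans hT.1,
        by rw [Finset.card_erase_of_mem (Finset.max'_mem _ _), hT.2]⟩
  have key : esymmOn s k lam ≤ ∑ p ∈ F ×ˢ P, lam p.1 * ∏ i ∈ p.2, lam i := by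
    have h1 : esymmOn s k lam = ∑ p ∈ A.image g, lam p.1 * ∏ i ∈ p.2, lam i := by
      rw [Finset.sum_image hinj]
      apply Finset.sum_congr rfl
      intro T hT
      have hne := hTne _ hT
      rw [hgeq _ hne]
      exact (Finset.mul_prod_erase _ _ (Finset.max'_mem _ _)).symm
    rw [h1]
    apply Finset.sum_le_sum_of_subset_of_nonneg
    · intro p hp
      rw [Finset.mem_image] at hp
      obtain ⟨T, hT, rfl⟩ := hp
      exact hmaps _ hT
    · intro p _ _
      exact le_of_lt (mul_pos (hpos _) (Finset.prod_pos fun i _ => hpos i))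
  refine key.trans (le_of_eq ?_)
  rw [Finset.sum_product, Finset.sum_mul]
  apply Finset.sum_congr rfl
  intro i _
  rw [esymmOn, Finset.mul_sum]
end

section
/- Let λ_1 ≥ λ_2 ≥ … ≥ λ_n > 0 be real numbers with n ≥ 2, let 1 ≤ k ≤ n − 1, and let λ̂_n ∈ ℝ^{n−1} denote (λ_1,…,λ_{n−1}). Then e_k(λ̂_n)/e_{k−1}(λ̂_n) ≥ ((n−k)/k) · λ_{n−1} · (λ_{n−1}/λ_1)^{k−1} ≥ 0. -/
open Matrix BigOperators Finset

/-- For `λ_1 ≥ … ≥ λ_n > 0`, `n ≥ 2`, `1 ≤ k ≤ n − 1`, and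
`λ̂_n = (λ_1, …, λ_{n−1})` (i.e. `λ` with the last entry removed):
`e_k(λ̂_n)/e_{k−1}(λ̂_n) ≥ ((n−k)/k) · λ_{n−1} · (λ_{n−1}/λ_1)^{k−1} ≥ 0`.
(Indices are 0-based in the formalization: `λ_1 = lam ⟨0,_⟩`, `λ_{n−1} = lam ⟨n−2,_⟩`,
and the last entry is `lam ⟨n−1,_⟩`.) -/
theorem esymm_ratio_lower_bound (n : ℕ) (hn : 2 ≤ n) (lam : Fin n → ℝ)
    (hpos : ∀ i, 0 < lam i)
    (hsort : ∀ i j : Fin n, i ≤ j → lam j ≤ lam i)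
    (k : ℕ) (hk1 : 1 ≤ k) (hkn : k ≤ n - 1) :
    (((n : ℝ) - k) / k) * lam ⟨n - 2, by omega⟩ *
        (lam ⟨n - 2, by omega⟩ / lam ⟨0, by omega⟩) ^ (k - 1) ≤
      esymmOn (Finset.univ.erase ⟨n - 1, by omega⟩) k lam /
        esymmOn (Finset.univ.erase ⟨n - 1, by omega⟩) (k - 1) lam
    ∧ (0 : ℝ) ≤ (((n : ℝ) - k) / k) * lam ⟨n - 2, by omega⟩ *
        (lam ⟨n - 2, by omega⟩ / lam ⟨0, by omega⟩) ^ (k - 1) := by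
  have hn2 : n - 2 < n := by omega
  have hn1 : n - 1 < n := by omega
  set a : ℝ := lam ⟨n - 2, hn2⟩ with ha_def
  set b : ℝ := lam ⟨0, by omega⟩ with hb_def
  set s : Finset (Fin n) := Finset.univ.erase ⟨n - 1, hn1⟩ with hs_def
  have ha : 0 < a := hpos _
  have hb : 0 < b := hpos _
  have hcard : s.card = n - 1 := by
    rw [hs_def, Finset.card_erase_of_mem (Finset.mem_univ _), Finset.card_univ, Fintype.card_fin]
  have hmema : ∀ i ∈ s, a ≤ lam i := by
    intro i hi
    apply hsort
    rw [Fin.le_def]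
    have : i ≠ ⟨n - 1, hn1⟩ := (Finset.mem_erase.mp hi).1
    have : i.val ≠ n - 1 := fun h => this (Fin.ext h)
    have := i.isLt
    simp only []
    omega
  have hmemb : ∀ i : Fin n, lam i ≤ b := by
    intro i
    apply hsort
    rw [Fin.le_def]
    exact Nat.zero_le _
  -- lower bound on e_k
  have hek : ((n - 1).choose k : ℝ) * a ^ k ≤ esymmOn s k lam := by
    rw [esymmOn]
    have := Finset.card_nsmul_le_sum (s.powersetCard k) (fun T => ∏ i ∈ T, lam i) (a ^ k)
      (fun T hT => by
        obtain ⟨hTs, hTcard⟩ := Finset.mem_powersetCard.mp hT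
        calc a ^ k = ∏ _i ∈ T, a := by rw [Finset.prod_const, hTcard]
          _ ≤ ∏ i ∈ T, lam i :=
            Finset.prod_le_prod (fun _ _ => le_of_lt ha) (fun i hi => hmema i (hTs hi)))
    rwa [Finset.card_powersetCard, hcard, nsmul_eq_mul] at this
  -- upper bound on e_{k-1}
  have hek1 : esymmOn s (k - 1) lam ≤ ((n - 1).choose (k - 1) : ℝ) * b ^ (k - 1) := by
    rw [esymmOn]
    have := Finset.sum_le_card_nsmul (s.powersetCard (k - 1)) (fun T => ∏ i ∈ T, lam i)
      (b ^ (k - 1))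
      (fun T hT => by
        obtain ⟨hTs, hTcard⟩ := Finset.mem_powersetCard.mp hT
        calc ∏ i ∈ T, lam i ≤ ∏ _i ∈ T, b :=
              Finset.prod_le_prod (fun i _ => le_of_lt (hpos i)) (fun i _ => hmemb i)
          _ = b ^ (k - 1) := by rw [Finset.prod_const, hTcard])
    rwa [Finset.card_powersetCard, hcard, nsmul_eq_mul] at this
  -- positivity of e_{k-1}
  have hek1pos : 0 < esymmOn s (k - 1) lam := by
    rw [esymmOn]
    apply Finset.sum_pos
    · intro T hT
      exact Finset.prod_pos fun i _ => hpos i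
    · apply Finset.powersetCard_nonempty.mpr
      omega
  set c : ℝ := (((n : ℝ) - k) / k) * a * (a / b) ^ (k - 1) with hc_def
  have hc0 : 0 ≤ c := by
    apply mul_nonneg (mul_nonneg (div_nonneg _ (by positivity)) (le_of_lt ha)) (by positivity)
    have : (k : ℝ) ≤ (n : ℝ) := by exact_mod_cast (by omega : k ≤ n)
    linarith
  -- key binomial identity
  have hchoose : ((n : ℝ) - k) * ((n - 1).choose (k - 1) : ℝ) = (k : ℝ) * ((n - 1).choose k : ℝ) := by
    have h := Nat.choose_succ_right_eq (n - 1) (k - 1)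
    rw [Nat.sub_add_cancel hk1] at h
    have h2 : n - 1 - (k - 1) = n - k := by omega
    rw [h2] at h
    have h' := congrArg (Nat.cast : ℕ → ℝ) h
    push_cast [Nat.cast_sub (show k ≤ n by omega)] at h'
    linarith
  have hkey : c * (((n - 1).choose (k - 1) : ℝ) * b ^ (k - 1)) = ((n - 1).choose k : ℝ) * a ^ k := by
    rw [hc_def]
    have hbpow : (a / b) ^ (k - 1) * b ^ (k - 1) = a ^ (k - 1) := by
      rw [div_pow, div_mul_cancel₀]
      positivity
    have hak : a * a ^ (k - 1) = a ^ k := by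
      rw [← pow_succ', Nat.sub_add_cancel hk1]
    have hkpos : (0 : ℝ) < k := by exact_mod_cast hk1
    have hC : ((n : ℝ) - k) / k * ((n - 1).choose (k - 1) : ℝ) = ((n - 1).choose k : ℝ) := by
      field_simp
      linarith [hchoose]
    calc ((n : ℝ) - k) / k * a * (a / b) ^ (k - 1) * (((n - 1).choose (k - 1) : ℝ) * b ^ (k - 1))
        = ((n : ℝ) - k) / k * ((n - 1).choose (k - 1) : ℝ) * (a * ((a / b) ^ (k - 1) * b ^ (k - 1))) := by ring
      _ = ((n - 1).choose k : ℝ) * a ^ k := by rw [hbpow, hak, hC]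
  constructor
  · rw [le_div_iff₀ hek1pos]
    calc c * esymmOn s (k - 1) lam
        ≤ c * (((n - 1).choose (k - 1) : ℝ) * b ^ (k - 1)) :=
          mul_le_mul_of_nonneg_left hek1 hc0
      _ = ((n - 1).choose k : ℝ) * a ^ k := hkey
      _ ≤ esymmOn s k lam := hek
  · exact hc0
end

section
/- Let λ_1 ≥ λ_2 ≥ … ≥ λ_n > 0 be real numbers, let 1 ≤ k ≤ n, and set α = ∑_{i=k}^{n} λ_i. Then ∑_{i=1}^{n} λ_i/(λ_i + α) ≤ k; equivalently, if K is an n×n real symmetric positive definite matrix with eigenvalues λ_1,…,λ_n, then Tr(K(K + αI)^{-1}) ≤ k. -/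
open Matrix BigOperators Finset

lemma vmv_mul (n : ℕ) (a b c d : Fin n → ℝ) :
    vecMulVec a b * vecMulVec c d = (b ⬝ᵥ c) • vecMulVec a d := by
  ext i j
  simp only [Matrix.mul_apply, vecMulVec_apply, Matrix.smul_apply, smul_eq_mul, dotProduct]
  rw [Finset.sum_mul]
  apply Finset.sum_congr rfl
  intros; ring

/-- For `λ_1 ≥ … ≥ λ_n > 0`, `1 ≤ k ≤ n`, and `α = ∑_{i=k}^{n} λ_i`:
`∑_i λ_i/(λ_i + α) ≤ k`; equivalently, for any real symmetric positive definite `K`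
with these eigenvalues (orthonormal eigenvectors `v`), `Tr(K (K + αI)⁻¹) ≤ k`.
(Indices are 0-based in the formalization, so `∑_{i=k}^{n} λ_i` becomes the sum over
indices `i` with `k ≤ i + 1`.) -/
theorem expected_size_le_k (n : ℕ) (lam : Fin n → ℝ) (hpos : ∀ i, 0 < lam i)
    (hsort : ∀ i j : Fin n, i ≤ j → lam j ≤ lam i)
    (k : ℕ) (hk1 : 1 ≤ k) (hkn : k ≤ n)
    (α : ℝ) (hα : α = ∑ i ∈ Finset.univ.filter (fun i : Fin n => k ≤ (i : ℕ) + 1), lam i) :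
    (∑ i, lam i / (lam i + α) ≤ (k : ℝ)) ∧
      ∀ (K : Matrix (Fin n) (Fin n) ℝ) (v : Fin n → Fin n → ℝ),
        K.IsSymm → K.PosDef →
        (∀ i j, v i ⬝ᵥ v j = if i = j then (1 : ℝ) else 0) →
        K = ∑ ℓ, lam ℓ • vecMulVec (v ℓ) (v ℓ) →
        (K * (K + α • (1 : Matrix (Fin n) (Fin n) ℝ))⁻¹).trace ≤ (k : ℝ) := by
  set S := Finset.univ.filter (fun i : Fin n => k ≤ (i : ℕ) + 1) with hS
  have hSne : S.Nonempty := by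
    refine ⟨⟨k - 1, by omega⟩, ?_⟩
    simp [hS]; omega
  have hαpos : 0 < α := by
    rw [hα]
    exact Finset.sum_pos (fun i _ => hpos i) hSne
  have hden : ∀ i, 0 < lam i + α := fun i => add_pos (hpos i) hαpos
  have main : ∑ i, lam i / (lam i + α) ≤ (k : ℝ) := by
    rw [← Finset.sum_filter_add_sum_filter_not Finset.univ (fun i : Fin n => k ≤ (i : ℕ) + 1)]
    have h1 : ∑ i ∈ S, lam i / (lam i + α) ≤ 1 := by
      calc ∑ i ∈ S, lam i / (lam i + α) ≤ ∑ i ∈ S, lam i / α := by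
            apply Finset.sum_le_sum
            intro i _
            apply div_le_div_of_nonneg_left (hpos i).le hαpos
            linarith [hpos i]
        _ = 1 := by rw [← Finset.sum_div, ← hα, div_self hαpos.ne']
    have h2 : ∑ i ∈ Finset.univ.filter (fun i : Fin n => ¬ k ≤ (i : ℕ) + 1),
        lam i / (lam i + α) ≤ ((k : ℝ) - 1) := by
      have hcard : (Finset.univ.filter (fun i : Fin n => ¬ k ≤ (i : ℕ) + 1)).card ≤ k - 1 := by
        have := Finset.card_le_card_of_injOn (fun i : Fin n => (i : ℕ))
          (s := Finset.univ.filter (fun i : Fin n => ¬ k ≤ (i : ℕ) + 1))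
          (t := Finset.range (k - 1))
          (by intro i hi; simp at hi ⊢; omega)
          (by intro a _ b _ h; exact Fin.val_injective h)
        simpa using this
      calc ∑ i ∈ Finset.univ.filter (fun i : Fin n => ¬ k ≤ (i : ℕ) + 1), lam i / (lam i + α)
          ≤ ∑ i ∈ Finset.univ.filter (fun i : Fin n => ¬ k ≤ (i : ℕ) + 1), 1 := by
            apply Finset.sum_le_sum
            intro i _
            rw [div_le_one (hden i)]
            linarith [hαpos]
        _ = ((Finset.univ.filter (fun i : Fin n => ¬ k ≤ (i : ℕ) + 1)).card : ℝ) := by simp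
        _ ≤ ((k : ℝ) - 1) := by
            have : ((Finset.univ.filter (fun i : Fin n => ¬ k ≤ (i : ℕ) + 1)).card : ℝ)
                ≤ ((k - 1 : ℕ) : ℝ) := by exact_mod_cast hcard
            have h' : ((k - 1 : ℕ) : ℝ) = (k : ℝ) - 1 := by
              have : (k : ℝ) ≥ 1 := by exact_mod_cast hk1
              push_cast [Nat.cast_sub hk1]; ring
            linarith
    linarith
  refine ⟨main, ?_⟩
  intro K v _ _ horth hKdec
  -- completeness: ∑ P_ℓ = 1
  set V : Matrix (Fin n) (Fin n) ℝ := Matrix.of v with hV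
  have hVVt : V * Vᵀ = 1 := by
    ext i j
    simpa [Matrix.mul_apply, hV, Matrix.one_apply, dotProduct] using horth i j
  have hVtV : Vᵀ * V = 1 := mul_eq_one_comm.mp hVVt
  have hcomplete : ∑ ℓ, vecMulVec (v ℓ) (v ℓ) = 1 := by
    rw [← hVtV]
    ext i j
    simp [Matrix.sum_apply, vecMulVec_apply, Matrix.mul_apply, hV, mul_comm]
  set M : Matrix (Fin n) (Fin n) ℝ := ∑ ℓ, (lam ℓ + α)⁻¹ • vecMulVec (v ℓ) (v ℓ) with hM
  have hmulPP : ∀ ℓ m : Fin n, vecMulVec (v ℓ) (v ℓ) * vecMulVec (v m) (v m)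
      = if ℓ = m then vecMulVec (v ℓ) (v ℓ) else 0 := by
    intro ℓ m
    rw [vmv_mul, horth]
    split_ifs with h
    · subst h; simp
    · simp
  have hKM : K * M = ∑ ℓ, (lam ℓ / (lam ℓ + α)) • vecMulVec (v ℓ) (v ℓ) := by
    rw [hKdec, hM, Finset.sum_mul_sum]
    rw [Finset.sum_comm]
    apply Finset.sum_congr rfl
    intro m _
    rw [Finset.sum_eq_single m]
    · rw [smul_mul_assoc, mul_smul_comm, hmulPP, if_pos rfl, smul_smul, div_eq_mul_inv]
    · intro ℓ _ hℓ
      rw [smul_mul_assoc, mul_smul_comm, hmulPP, if_neg hℓ, smul_zero, smul_zero]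
    · intro h; exact absurd (Finset.mem_univ m) h
  have hinv : (K + α • (1 : Matrix (Fin n) (Fin n) ℝ))⁻¹ = M := by
    apply Matrix.inv_eq_right_inv
    rw [Matrix.add_mul, hKM, Matrix.smul_mul, Matrix.one_mul, hM, Finset.smul_sum]
    rw [← Finset.sum_add_distrib, ← hcomplete]
    apply Finset.sum_congr rfl
    intro ℓ _
    rw [smul_smul, ← add_smul]
    have h1 : lam ℓ / (lam ℓ + α) + α * (lam ℓ + α)⁻¹ = 1 := by
      field_simp; rw [div_self (hden ℓ).ne']
    rw [h1, one_smul]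
  rw [hinv, hKM]
  have : (∑ ℓ, (lam ℓ / (lam ℓ + α)) • vecMulVec (v ℓ) (v ℓ)).trace
      = ∑ ℓ, lam ℓ / (lam ℓ + α) := by
    rw [Matrix.trace_sum]
    apply Finset.sum_congr rfl
    intro ℓ _
    rw [Matrix.trace_smul]
    have : (vecMulVec (v ℓ) (v ℓ)).trace = 1 := by
      have := horth ℓ ℓ
      simp only [if_pos rfl] at this
      simpa [Matrix.trace, Matrix.diag, vecMulVec_apply, dotProduct] using this
    rw [this, smul_eq_mul, mul_one]
  rw [this]
  exact main
end
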